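/- arXiv:2603.27851 — 4 statements merged into one kernel-verified Lean document; each statement's English description precedes it below -/
import Mathlib

section
/- Let G be a compact Hausdorff topological group and D : G → [0,∞) a continuous function. If there exists a regular Borel probability measure ν on G which is D-dominating, then the normalized Haar measure σ_G on G is D-dominating, i.e. 1 ≤ ∫_G D(ψφ) dσ_G(φ) for all ψ ∈ G. -/
open MeasureTheory

lemma haar_aux_isHaar
    {G : Type*} [Group G] [TopologicalSpace G] [IsTopologicalGroup G]
    [CompactSpace G] [MeasurableSpace G] [BorelSpace G]
    (σ : Measure G) [IsProbabilityMeasure σ] [σ.IsMulLeftInvariant] :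
    σ.IsHaarMeasure := by
  apply Measure.isHaarMeasure_of_isCompact_nonempty_interior σ Set.univ isCompact_univ
  · simp [interior_univ]
  · simp
  · simp

lemma haar_aux_right_inv
    {G : Type*} [Group G] [TopologicalSpace G] [IsTopologicalGroup G]
    [CompactSpace G] [T2Space G] [MeasurableSpace G] [BorelSpace G]
    (σ : Measure G) [IsProbabilityMeasure σ] [σ.IsMulLeftInvariant] :
    σ.IsMulRightInvariant := by
  constructor
  intro g
  have h1 : IsProbabilityMeasure (σ.map (· * g)) :=
    Measure.isProbabilityMeasure_map (measurable_mul_const g).aemeasurable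
  have h2 : σ.IsHaarMeasure := haar_aux_isHaar σ
  have h3 : (σ.map (· * g)).IsHaarMeasure := by
    apply Measure.isHaarMeasure_of_isCompact_nonempty_interior _ Set.univ isCompact_univ
    · simp [interior_univ]
    · simp [h1.measure_univ]
    · simp [h1.measure_univ]
  exact Measure.isHaarMeasure_eq_of_isProbabilityMeasure _ σ

/-- If some regular Borel probability measure `ν` on a compact Hausdorff
topological group `G` is `D`-dominating for a continuous `D : G → [0,∞)`, then the normalized
Haar measure `σ` (the left-invariant regular Borel probability measure on `G`) is
`D`-dominating. -/
theorem haar_is_D_dominating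
    {G : Type*} [Group G] [TopologicalSpace G] [IsTopologicalGroup G]
    [CompactSpace G] [T2Space G] [MeasurableSpace G] [BorelSpace G]
    (σ : Measure G) [IsProbabilityMeasure σ] [σ.IsMulLeftInvariant] [σ.Regular]
    (D : G → ℝ) (hDcont : Continuous D) (hDnonneg : ∀ φ : G, 0 ≤ D φ)
    (ν : Measure G) [IsProbabilityMeasure ν] [ν.Regular]
    (hν : ∀ ψ : G, 1 ≤ ∫ φ, D (ψ * φ) ∂ν) :
    ∀ ψ : G, 1 ≤ ∫ φ, D (ψ * φ) ∂σ := by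
  have hRI : σ.IsMulRightInvariant := haar_aux_right_inv σ
  intro ψ
  rw [integral_mul_left_eq_self (μ := σ) D ψ]
  have huc : Continuous (Function.uncurry fun φ χ : G => D (φ * χ)) :=
    hDcont.comp continuous_mul
  have hcs : HasCompactSupport (Function.uncurry fun φ χ : G => D (φ * χ)) :=
    IsCompact.of_isClosed_subset isCompact_univ (isClosed_tsupport _) (Set.subset_univ _)
  -- Fubini for continuous compactly supported functions
  have key : ∫ φ, ∫ χ, D (φ * χ) ∂ν ∂σ = ∫ φ, D φ ∂σ := by
    rw [integral_integral_swap_of_hasCompactSupport huc hcs]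
    have h : ∀ χ : G, ∫ φ, D (φ * χ) ∂σ = ∫ φ, D φ ∂σ := fun χ =>
      integral_mul_right_eq_self (μ := σ) D χ
    simp_rw [h]
    simp
  rw [← key]
  -- the inner integral is a continuous function of φ
  have gcont : Continuous fun φ : G => ∫ χ, D (φ * χ) ∂ν := by
    rw [← continuousOn_univ]
    apply continuousOn_integral_of_compact_support isCompact_univ
    · exact huc.continuousOn
    · intro p x _ hx
      exact absurd (Set.mem_univ x) hx
  have gint : Integrable (fun φ : G => ∫ χ, D (φ * χ) ∂ν) σ :=
    integrableOn_univ.mp (gcont.continuousOn.integrableOn_compact isCompact_univ)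
  calc (1 : ℝ) = ∫ _, (1 : ℝ) ∂σ := by simp
    _ ≤ ∫ φ, ∫ χ, D (φ * χ) ∂ν ∂σ := integral_mono (integrable_const 1) gint fun φ => hν φ
end

section
/- Let E be a Banach space, Y a metric space, 1 ≤ p < ∞ and u : E → Y a Lipschitz map. Then u is Lipschitz p-B_{E*}-summing if and only if there exist a constant C > 0 and a regular Borel probability measure ν on the closed unit ball B_{E*} of the dual of E endowed with the weak* topology such that d_Y(u(x),u(q)) ≤ C (∫_{B_{E*}} |α(x−q)|^p dν(α))^{1/p} for all x, q ∈ E. Moreover, π_p^*(u) equals the infimum of all constants C for which such a measure exists. -/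
open MeasureTheory

/-- The closed unit ball of the dual of `E`, endowed with the weak* topology (as a subtype of
`WeakDual ℝ E`). -/
def WeakStarBall (E : Type*) [NormedAddCommGroup E] [NormedSpace ℝ E] : Type _ :=
  {α : WeakDual ℝ E // ‖WeakDual.toStrongDual α‖ ≤ 1}

noncomputable instance (E : Type*) [NormedAddCommGroup E] [NormedSpace ℝ E] :
    TopologicalSpace (WeakStarBall E) :=
  instTopologicalSpaceSubtype

noncomputable instance (E : Type*) [NormedAddCommGroup E] [NormedSpace ℝ E] :
    MeasurableSpace (WeakStarBall E) := borel _

instance (E : Type*) [NormedAddCommGroup E] [NormedSpace ℝ E] :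
    BorelSpace (WeakStarBall E) := ⟨rfl⟩

open scoped ENNReal NNReal

section basic
variable {E : Type*} [NormedAddCommGroup E] [NormedSpace ℝ E]

instance : CompactSpace (WeakStarBall E) := by
  have : {α : WeakDual ℝ E | ‖WeakDual.toStrongDual α‖ ≤ 1} =
      WeakDual.toStrongDual ⁻¹' Metric.closedBall 0 1 := by
    ext α; simp [Metric.mem_closedBall]
  have hc : IsCompact {α : WeakDual ℝ E | ‖WeakDual.toStrongDual α‖ ≤ 1} := by
    rw [this]; exact WeakDual.isCompact_closedBall (0 : StrongDual ℝ E) 1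
  exact isCompact_iff_compactSpace.mp hc

instance : T2Space (WeakStarBall E) :=
  show T2Space {α : WeakDual ℝ E // ‖WeakDual.toStrongDual α‖ ≤ 1} from inferInstance

instance : Nonempty (WeakStarBall E) := ⟨⟨0, by simp⟩⟩

lemma WeakStarBall.abs_le (α : WeakStarBall E) (v : E) : |α.1 v| ≤ ‖v‖ := by
  have h := α.2
  calc |α.1 v| = ‖(WeakDual.toStrongDual α.1) v‖ := rfl
    _ ≤ ‖WeakDual.toStrongDual α.1‖ * ‖v‖ := (WeakDual.toStrongDual α.1).le_opNorm v
    _ ≤ 1 * ‖v‖ := by gcongr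
    _ = ‖v‖ := one_mul _

lemma WeakStarBall.continuous_eval (v : E) :
    Continuous fun α : WeakStarBall E => α.1 v := by
  exact (WeakDual.eval_continuous v).comp continuous_subtype_val

end basic

section sums
variable {E : Type*} [NormedAddCommGroup E] [NormedSpace ℝ E] {p : ℝ} {n : ℕ}

lemma continuous_absrpow (hp : 0 < p) (v : E) :
    Continuous fun α : WeakStarBall E => |α.1 v| ^ p := by
  have h1 : Continuous fun α : WeakStarBall E => |α.1 v| :=
    (WeakStarBall.continuous_eval v).abs
  have h2 : Continuous fun x : ℝ => x ^ p := by
    rw [continuous_iff_continuousAt]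
    intro x
    exact Real.continuousAt_rpow_const x p (Or.inr hp.le)
  exact h2.comp h1

lemma continuous_wsum (hp : 0 < p) (lam : Fin n → ℝ) (v : Fin n → E) :
    Continuous fun α : WeakStarBall E => ∑ j, lam j * |α.1 (v j)| ^ p := by
  apply continuous_finset_sum
  intro j _
  exact continuous_const.mul (continuous_absrpow hp (v j))

lemma wsum_nonneg (_hp : 0 < p) (lam : Fin n → ℝ) (hlam : ∀ j, 0 ≤ lam j) (v : Fin n → E)
    (α : WeakStarBall E) : 0 ≤ ∑ j, lam j * |α.1 (v j)| ^ p := by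
  apply Finset.sum_nonneg
  intro j _
  exact mul_nonneg (hlam j) (Real.rpow_nonneg (abs_nonneg _) _)

lemma wsum_le (hp : 0 < p) (lam : Fin n → ℝ) (hlam : ∀ j, 0 ≤ lam j) (v : Fin n → E)
    (α : WeakStarBall E) :
    ∑ j, lam j * |α.1 (v j)| ^ p ≤ ∑ j, lam j * ‖v j‖ ^ p := by
  apply Finset.sum_le_sum
  intro j _
  exact mul_le_mul_of_nonneg_left
    (Real.rpow_le_rpow (abs_nonneg _) (WeakStarBall.abs_le α (v j)) hp.le) (hlam j)

lemma bddAbove_wsum (hp : 0 < p) (lam : Fin n → ℝ) (hlam : ∀ j, 0 ≤ lam j) (v : Fin n → E) :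
    BddAbove (Set.range fun α : WeakStarBall E => ∑ j, lam j * |α.1 (v j)| ^ p) := by
  refine ⟨∑ j, lam j * ‖v j‖ ^ p, ?_⟩
  rintro _ ⟨α, rfl⟩
  exact wsum_le hp lam hlam v α

lemma bddAbove_usum (hp : 0 < p) (v : Fin n → E) :
    BddAbove (Set.range fun α : WeakStarBall E => ∑ j, |α.1 (v j)| ^ p) := by
  have := bddAbove_wsum hp (fun _ : Fin n => (1:ℝ)) (fun _ => zero_le_one) v
  simpa using this

lemma bddAbove_usum_rt (hp : 0 < p) (v : Fin n → E) :
    BddAbove (Set.range fun α : WeakStarBall E => (∑ j, |α.1 (v j)| ^ p) ^ (1/p)) := by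
  refine ⟨(∑ j, ‖v j‖ ^ p) ^ (1/p), ?_⟩
  rintro _ ⟨α, rfl⟩
  apply Real.rpow_le_rpow (Finset.sum_nonneg fun j _ => Real.rpow_nonneg (abs_nonneg _) _)
  · have := wsum_le hp (fun _ : Fin n => (1:ℝ)) (fun _ => zero_le_one) v α
    simpa using this
  · positivity

end sums

section summing
variable {E : Type*} [NormedAddCommGroup E] [NormedSpace ℝ E]
variable {Y : Type*} [MetricSpace Y]

/-- Power form of the summing inequality. -/
lemma summing_pow {p C : ℝ} (hp : 1 ≤ p) (hC : 0 ≤ C) {u : E → Y}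
    (h : ∀ n : ℕ, ∀ x q : Fin n → E,
      (∑ j, dist (u (x j)) (u (q j)) ^ p) ^ (1 / p) ≤
        C * ⨆ α : WeakStarBall E, (∑ j, |α.1 (x j - q j)| ^ p) ^ (1 / p)) :
    ∀ n : ℕ, ∀ x q : Fin n → E,
      ∑ j, dist (u (x j)) (u (q j)) ^ p ≤
        C ^ p * ⨆ α : WeakStarBall E, ∑ j, |α.1 (x j - q j)| ^ p := by
  intro n x q
  have hp0 : 0 < p := lt_of_lt_of_le one_pos hp
  set v : Fin n → E := fun j => x j - q j with hv
  set S : ℝ := ⨆ α : WeakStarBall E, (∑ j, |α.1 (v j)| ^ p) ^ (1/p) with hS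
  set T : ℝ := ⨆ α : WeakStarBall E, ∑ j, |α.1 (v j)| ^ p with hT
  have hsum_nonneg : ∀ α : WeakStarBall E, 0 ≤ ∑ j, |α.1 (v j)| ^ p := fun α =>
    Finset.sum_nonneg fun j _ => Real.rpow_nonneg (abs_nonneg _) _
  have hT0 : 0 ≤ T := by
    obtain α := Classical.arbitrary (WeakStarBall E)
    exact le_trans (hsum_nonneg α) (le_ciSup (bddAbove_usum hp0 v) α)
  have hS0 : 0 ≤ S := by
    obtain α := Classical.arbitrary (WeakStarBall E)
    exact le_trans (Real.rpow_nonneg (hsum_nonneg α) _) (le_ciSup (bddAbove_usum_rt hp0 v) α)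
  have hST : S ≤ T ^ (1/p) := by
    apply ciSup_le
    intro α
    exact Real.rpow_le_rpow (hsum_nonneg α) (le_ciSup (bddAbove_usum hp0 v) α) (by positivity)
  have hd0 : 0 ≤ ∑ j, dist (u (x j)) (u (q j)) ^ p :=
    Finset.sum_nonneg fun j _ => Real.rpow_nonneg dist_nonneg _
  have key := h n x q
  calc ∑ j, dist (u (x j)) (u (q j)) ^ p
      = ((∑ j, dist (u (x j)) (u (q j)) ^ p) ^ (1/p)) ^ p := by
        rw [← Real.rpow_mul hd0, one_div_mul_cancel hp0.ne', Real.rpow_one]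
    _ ≤ (C * S) ^ p := Real.rpow_le_rpow (Real.rpow_nonneg hd0 _) key hp0.le
    _ = C ^ p * S ^ p := Real.mul_rpow hC hS0
    _ ≤ C ^ p * (T ^ (1/p)) ^ p := by
        have : S ^ p ≤ (T ^ (1/p)) ^ p := Real.rpow_le_rpow hS0 hST hp0.le
        exact mul_le_mul_of_nonneg_left this (Real.rpow_nonneg hC p)
    _ = C ^ p * T := by
        rw [← Real.rpow_mul hT0, one_div_mul_cancel hp0.ne', Real.rpow_one]

end summing

section summing2
variable {E : Type*} [NormedAddCommGroup E] [NormedSpace ℝ E]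
variable {Y : Type*} [MetricSpace Y]

lemma sum_repeat {n : ℕ} (k : Fin n → ℕ) (F : Fin n → ℝ) :
    ∑ i : Fin (Fintype.card (Σ j : Fin n, Fin (k j))),
      F (((Fintype.equivFin (Σ j : Fin n, Fin (k j))).symm i).1)
      = ∑ j, (k j : ℝ) * F j := by
  rw [Equiv.sum_comp (Fintype.equivFin (Σ j : Fin n, Fin (k j))).symm
    (fun t : (Σ j : Fin n, Fin (k j)) => F t.1)]
  rw [← Finset.univ_sigma_univ, Finset.sum_sigma]
  simp [mul_comm, Finset.sum_const, nsmul_eq_mul]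

lemma summing_nat {p C : ℝ} (hp : 1 ≤ p) (hC : 0 ≤ C) {u : E → Y}
    (h : ∀ n : ℕ, ∀ x q : Fin n → E,
      (∑ j, dist (u (x j)) (u (q j)) ^ p) ^ (1 / p) ≤
        C * ⨆ α : WeakStarBall E, (∑ j, |α.1 (x j - q j)| ^ p) ^ (1 / p)) :
    ∀ n : ℕ, ∀ x q : Fin n → E, ∀ k : Fin n → ℕ,
      ∑ j, (k j : ℝ) * dist (u (x j)) (u (q j)) ^ p ≤
        C ^ p * ⨆ α : WeakStarBall E, ∑ j, (k j : ℝ) * |α.1 (x j - q j)| ^ p := by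
  intro n x q k
  have key := summing_pow hp hC h (Fintype.card (Σ j : Fin n, Fin (k j)))
    (fun i => x ((Fintype.equivFin (Σ j : Fin n, Fin (k j))).symm i).1)
    (fun i => q ((Fintype.equivFin (Σ j : Fin n, Fin (k j))).symm i).1)
  refine le_of_le_of_eq (le_of_eq_of_le ?_ key) ?_
  · exact (sum_repeat k (fun j => dist (u (x j)) (u (q j)) ^ p)).symm
  · exact congrArg (fun z => C ^ p * z)
      (iSup_congr fun α => sum_repeat k (fun j => |α.1 (x j - q j)| ^ p))

lemma summing_weighted {p C : ℝ} (hp : 1 ≤ p) (hC : 0 ≤ C) {u : E → Y}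
    (h : ∀ n : ℕ, ∀ x q : Fin n → E,
      (∑ j, dist (u (x j)) (u (q j)) ^ p) ^ (1 / p) ≤
        C * ⨆ α : WeakStarBall E, (∑ j, |α.1 (x j - q j)| ^ p) ^ (1 / p)) :
    ∀ n : ℕ, ∀ x q : Fin n → E, ∀ lam : Fin n → ℝ, (∀ j, 0 ≤ lam j) →
      ∑ j, lam j * dist (u (x j)) (u (q j)) ^ p ≤
        C ^ p * ⨆ α : WeakStarBall E, ∑ j, lam j * |α.1 (x j - q j)| ^ p := by
  intro n x q lam hlam
  have hp0 : 0 < p := lt_of_lt_of_le one_pos hp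
  set v : Fin n → E := fun j => x j - q j with hv
  set Sw : ℝ := ⨆ α : WeakStarBall E, ∑ j, lam j * |α.1 (v j)| ^ p with hSw
  set B : ℝ := ∑ j, ‖v j‖ ^ p with hB
  have hB0 : 0 ≤ B := Finset.sum_nonneg fun j _ => Real.rpow_nonneg (norm_nonneg _) _
  have main : ∀ D : ℕ, 0 < D →
      ∑ j, lam j * dist (u (x j)) (u (q j)) ^ p ≤ C ^ p * Sw + C ^ p * B / D := by
    intro D hD
    have hDR : (0:ℝ) < (D:ℝ) := by exact_mod_cast hD
    set k : Fin n → ℕ := fun j => ⌈lam j * D⌉₊ with hk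
    have hk_ge : ∀ j, lam j * D ≤ k j := fun j => Nat.le_ceil _
    have hk_le : ∀ j, (k j : ℝ) ≤ lam j * D + 1 := fun j =>
      le_of_lt (Nat.ceil_lt_add_one (mul_nonneg (hlam j) hDR.le))
    have step1 : ∑ j, lam j * dist (u (x j)) (u (q j)) ^ p
        ≤ (1/D) * ∑ j, (k j : ℝ) * dist (u (x j)) (u (q j)) ^ p := by
      rw [Finset.mul_sum]
      apply Finset.sum_le_sum
      intro j _
      have hd : (0:ℝ) ≤ dist (u (x j)) (u (q j)) ^ p := Real.rpow_nonneg dist_nonneg _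
      have hlj : lam j ≤ (k j : ℝ) / D := (le_div_iff₀ hDR).mpr (hk_ge j)
      calc lam j * dist (u (x j)) (u (q j)) ^ p
          ≤ ((k j : ℝ) / D) * dist (u (x j)) (u (q j)) ^ p :=
            mul_le_mul_of_nonneg_right hlj hd
        _ = 1/D * ((k j : ℝ) * dist (u (x j)) (u (q j)) ^ p) := by ring
    have step2 := summing_nat hp hC h n x q k
    have step3 : (⨆ α : WeakStarBall E, ∑ j, (k j : ℝ) * |α.1 (v j)| ^ p)
        ≤ D * Sw + B := by
      apply ciSup_le
      intro α
      have habs : ∀ j, 0 ≤ |α.1 (v j)| ^ p := fun j => Real.rpow_nonneg (abs_nonneg _) _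
      have h1 : ∑ j, (k j : ℝ) * |α.1 (v j)| ^ p
          ≤ ∑ j, (lam j * D + 1) * |α.1 (v j)| ^ p := by
        apply Finset.sum_le_sum
        intro j _
        exact mul_le_mul_of_nonneg_right (hk_le j) (habs j)
      have h2 : ∑ j, (lam j * D + 1) * |α.1 (v j)| ^ p
          = D * (∑ j, lam j * |α.1 (v j)| ^ p) + ∑ j, |α.1 (v j)| ^ p := by
        rw [Finset.mul_sum, ← Finset.sum_add_distrib]
        congr 1; funext j; ring
      have h3 : ∑ j, lam j * |α.1 (v j)| ^ p ≤ Sw :=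
        le_ciSup (bddAbove_wsum hp0 lam hlam v) α
      have h4 : ∑ j, |α.1 (v j)| ^ p ≤ B := by
        have := wsum_le hp0 (fun _ : Fin n => (1:ℝ)) (fun _ => zero_le_one) v α
        simpa using this
      calc ∑ j, (k j : ℝ) * |α.1 (v j)| ^ p ≤ _ := h1
        _ = _ := h2
        _ ≤ D * Sw + B := by
            have := mul_le_mul_of_nonneg_left h3 hDR.le
            linarith
    have hCp : (0:ℝ) ≤ C ^ p := Real.rpow_nonneg hC _
    calc ∑ j, lam j * dist (u (x j)) (u (q j)) ^ p
        ≤ (1/D) * ∑ j, (k j : ℝ) * dist (u (x j)) (u (q j)) ^ p := step1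
      _ ≤ (1/D) * (C ^ p * ⨆ α : WeakStarBall E, ∑ j, (k j : ℝ) * |α.1 (v j)| ^ p) := by
          apply mul_le_mul_of_nonneg_left _ (by positivity)
          exact step2
      _ ≤ (1/D) * (C ^ p * (D * Sw + B)) := by
          apply mul_le_mul_of_nonneg_left _ (by positivity)
          exact mul_le_mul_of_nonneg_left step3 hCp
      _ = C ^ p * Sw + C ^ p * B / D := by
          field_simp
  -- now let D → ∞
  apply le_of_forall_pos_le_add
  intro ε hε
  obtain ⟨D, hD⟩ := exists_nat_gt (max 1 (C ^ p * B / ε))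
  have hD0 : 0 < D := by
    have : (1:ℝ) < D := lt_of_le_of_lt (le_max_left _ _) hD
    exact_mod_cast lt_trans zero_lt_one this
  have hDR : (0:ℝ) < D := by exact_mod_cast hD0
  have h2 : C ^ p * B / D < ε := by
    have hlt : C ^ p * B / ε < D := lt_of_le_of_lt (le_max_right _ _) hD
    rw [div_lt_iff₀ hDR]
    rw [div_lt_iff₀ hε] at hlt
    linarith
  linarith [main D hD0]

end summing2

section functional
variable {E : Type*} [NormedAddCommGroup E] [NormedSpace ℝ E]
variable {Y : Type*} [MetricSpace Y]

noncomputable def absPowMap {p : ℝ} (hp : 0 < p) (w : E) : C(WeakStarBall E, ℝ) :=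
  ⟨fun α => |α.1 w| ^ p, continuous_absrpow hp w⟩

@[simp] lemma absPowMap_apply {p : ℝ} (hp : 0 < p) (w : E) (α : WeakStarBall E) :
    absPowMap hp w α = |α.1 w| ^ p := rfl

lemma exists_functional {p C : ℝ} (hp : 1 ≤ p) (hC : 0 < C) {u : E → Y}
    (h : ∀ n : ℕ, ∀ x q : Fin n → E,
      (∑ j, dist (u (x j)) (u (q j)) ^ p) ^ (1 / p) ≤
        C * ⨆ α : WeakStarBall E, (∑ j, |α.1 (x j - q j)| ^ p) ^ (1 / p)) :
    ∃ Λ : C(WeakStarBall E, ℝ) →L[ℝ] ℝ,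
      (∀ f : C(WeakStarBall E, ℝ), (∀ α, 0 ≤ f α) → 0 ≤ Λ f) ∧
      Λ 1 = 1 ∧
      ∀ x q : E, dist (u x) (u q) ^ p ≤
        C ^ p * Λ (absPowMap (lt_of_lt_of_le one_pos hp) (x - q)) := by
  have hp0 : 0 < p := lt_of_lt_of_le one_pos hp
  classical
  set g : E × E → C(WeakStarBall E, ℝ) := fun xq =>
    ContinuousMap.const _ (dist (u xq.1) (u xq.2) ^ p) - C ^ p • absPowMap hp0 (xq.1 - xq.2)
    with hg
  have hg_apply : ∀ xq : E × E, ∀ α, g xq α =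
      dist (u xq.1) (u xq.2) ^ p - C ^ p * |α.1 (xq.1 - xq.2)| ^ p := by
    intro xq α
    simp [hg]
  set Qset : Set C(WeakStarBall E, ℝ) := convexHull ℝ (Set.range g) with hQ
  set Pset : Set C(WeakStarBall E, ℝ) := {f | ∀ α, 0 < f α} with hP
  -- P is open
  have hPopen : IsOpen Pset := by
    rw [Metric.isOpen_iff]
    intro f hf
    obtain ⟨α₀, -, hα₀⟩ := isCompact_univ.exists_isMinOn Set.univ_nonempty
      f.continuous.continuousOn
    refine ⟨f α₀, hf α₀, ?_⟩
    intro f' hf'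
    intro α
    have h1 : dist (f' α) (f α) ≤ dist f' f := ContinuousMap.dist_apply_le_dist α
    have h2 : dist f' f < f α₀ := hf'
    have h3 : f α₀ ≤ f α := hα₀ (Set.mem_univ α)
    have h4 : |f' α - f α| < f α₀ := by
      rw [← Real.dist_eq]; exact lt_of_le_of_lt h1 h2
    have := abs_sub_lt_iff.mp h4
    linarith [this.2]
  -- P is convex
  have hPconv : Convex ℝ Pset := by
    intro f hf f' hf' a b ha hb hab
    intro α
    have : (a • f + b • f') α = a * f α + b * f' α := by
      simp
    rw [this]
    rcases eq_or_lt_of_le ha with rfl | ha'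
    · simp only [zero_add] at hab
      subst hab
      simpa using hf' α
    · have : 0 ≤ b * f' α := mul_nonneg hb (hf' α).le
      nlinarith [hf α]
  -- disjointness
  have hdisj : Disjoint Pset Qset := by
    rw [Set.disjoint_left]
    intro f hfP hfQ
    rw [hQ, convexHull_eq] at hfQ
    obtain ⟨ι, t, w, z, hw0, hw1, hz, hcm⟩ := hfQ
    set F : ι → E × E := fun i =>
      if hi : ∃ xq : E × E, z i = g xq then hi.choose else (0, 0) with hF
    have hzF : ∀ i ∈ t, z i = g (F i) := by
      intro i hi
      obtain ⟨xq, hxq⟩ := hz i hi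
      have hex : ∃ xq : E × E, z i = g xq := ⟨xq, hxq.symm⟩
      simp only [hF, dif_pos hex]
      exact hex.choose_spec
    have hfval : ∀ α, f α = ∑ i ∈ t, w i * (g (F i) α) := by
      intro α
      rw [← hcm, Finset.centerMass_eq_of_sum_1 _ _ hw1]
      rw [ContinuousMap.sum_apply]
      apply Finset.sum_congr rfl
      intro i hi
      rw [ContinuousMap.smul_apply, hzF i hi]
      simp
    obtain ⟨α₀, -, hα₀⟩ := isCompact_univ.exists_isMinOn Set.univ_nonempty
      f.continuous.continuousOn
    have hε : 0 < f α₀ := hfP α₀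
    set m := t.card with hm
    set e : ↥t ≃ Fin m := t.equivFin with he
    have htrans : ∀ G : ι → ℝ, ∑ i ∈ t, G i = ∑ j : Fin m, G ((e.symm j) : ι) := by
      intro G
      rw [← Finset.sum_coe_sort t G, ← Equiv.sum_comp e.symm (fun i : ↥t => G ↑i)]
    set lam : Fin m → ℝ := fun j => w ((e.symm j) : ι) with hlamdef
    set x' : Fin m → E := fun j => (F ((e.symm j) : ι)).1 with hx'
    set q' : Fin m → E := fun j => (F ((e.symm j) : ι)).2 with hq'
    have hlam : ∀ j, 0 ≤ lam j := fun j => hw0 _ (e.symm j).2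
    have hCp : (0:ℝ) < C ^ p := Real.rpow_pos_of_pos hC _
    set A : ℝ := ∑ j, lam j * dist (u (x' j)) (u (q' j)) ^ p with hA
    have hptwise : ∀ α : WeakStarBall E,
        C ^ p * (∑ j, lam j * |α.1 (x' j - q' j)| ^ p) ≤ A - f α₀ := by
      intro α
      have hfα : f α = A - C ^ p * (∑ j, lam j * |α.1 (x' j - q' j)| ^ p) := by
        rw [hfval α, htrans (fun i => w i * (g (F i) α))]
        rw [hA, Finset.mul_sum, ← Finset.sum_sub_distrib]
        apply Finset.sum_congr rfl
        intro j _
        rw [hg_apply]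
        ring
      have h3 : f α₀ ≤ f α := hα₀ (Set.mem_univ α)
      rw [hfα] at h3
      linarith
    have hSw : (⨆ α : WeakStarBall E, ∑ j, lam j * |α.1 (x' j - q' j)| ^ p)
        ≤ (A - f α₀) / C ^ p := by
      apply ciSup_le
      intro α
      rw [le_div_iff₀ hCp]
      rw [mul_comm]
      exact hptwise α
    have hsum := summing_weighted hp hC.le h m x' q' lam hlam
    have : A ≤ A - f α₀ := by
      calc A ≤ C ^ p * ⨆ α : WeakStarBall E, ∑ j, lam j * |α.1 (x' j - q' j)| ^ p := hsum
        _ ≤ C ^ p * ((A - f α₀) / C ^ p) := mul_le_mul_of_nonneg_left hSw hCp.le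
        _ = A - f α₀ := by field_simp
    linarith
  -- separation
  obtain ⟨φ, c, hφP, hφQ⟩ :=
    geometric_hahn_banach_open hPconv hPopen (convex_convexHull ℝ _) hdisj
  have hone : (1 : C(WeakStarBall E, ℝ)) ∈ Pset := by
    intro α
    simp
  have hφ1 : φ 1 < c := hφP _ hone
  have hg00 : g (0, 0) = 0 := by
    ext α
    rw [hg_apply]
    simp [Real.zero_rpow hp0.ne']
  have h0Q : (0 : C(WeakStarBall E, ℝ)) ∈ Qset :=
    hg00 ▸ subset_convexHull ℝ _ (Set.mem_range_self (0, 0))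
  have hc0 : c ≤ 0 := by simpa using hφQ 0 h0Q
  have hφ1neg : φ 1 < 0 := lt_of_lt_of_le hφ1 hc0
  have hc0' : 0 ≤ c := by
    by_contra hcneg
    push_neg at hcneg
    set s : ℝ := c / (2 * φ 1) with hs
    have hspos : 0 < s := div_pos_iff.mpr (Or.inr ⟨hcneg, by linarith⟩)
    have hsP : s • (1 : C(WeakStarBall E, ℝ)) ∈ Pset := by
      intro α
      simpa using hspos
    have hlt := hφP _ hsP
    have heq : φ (s • (1 : C(WeakStarBall E, ℝ))) = s * φ 1 := by
      rw [_root_.map_smul, smul_eq_mul]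
    have hφ1ne : φ 1 ≠ 0 := ne_of_lt hφ1neg
    have heq2 : s * φ 1 = c / 2 := by
      rw [hs]
      field_simp
    rw [heq, heq2] at hlt
    linarith
  have hcz : c = 0 := le_antisymm hc0 hc0'
  -- positive functional
  have hφnonpos : ∀ f : C(WeakStarBall E, ℝ), (∀ α, 0 ≤ f α) → φ f ≤ 0 := by
    intro f hf
    by_contra hpos
    push_neg at hpos
    set s : ℝ := φ f / (2 * (- φ 1)) with hs
    have hspos : 0 < s := div_pos hpos (by linarith)
    have hsP : f + s • (1 : C(WeakStarBall E, ℝ)) ∈ Pset := by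
      intro α
      have h1 : (f + s • (1 : C(WeakStarBall E, ℝ))) α = f α + s := by simp
      rw [h1]
      have := hf α
      linarith
    have hlt := hφP _ hsP
    have heq : φ (f + s • (1 : C(WeakStarBall E, ℝ))) = φ f + s * φ 1 := by
      rw [map_add, _root_.map_smul, smul_eq_mul]
    rw [heq, hcz] at hlt
    have hφ1ne : φ 1 ≠ 0 := ne_of_lt hφ1neg
    have heq2 : s * φ 1 = - (φ f / 2) := by
      rw [hs]
      field_simp
    rw [heq2] at hlt
    linarith
  -- normalize
  set a : ℝ := φ 1 with ha
  have hane : a ≠ 0 := ne_of_lt hφ1neg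
  have hapos : 0 < -a := by simpa using hφ1neg
  refine ⟨(-a)⁻¹ • (-φ), ?_, ?_, ?_⟩
  · intro f hf
    have h1 : ((-a)⁻¹ • (-φ)) f = (-a)⁻¹ * (-(φ f)) := by
      simp [mul_comm]
    rw [h1]
    have := hφnonpos f hf
    have h2 : 0 ≤ -(φ f) := by linarith
    positivity
  · have h1 : ((-a)⁻¹ • (-φ)) (1 : C(WeakStarBall E, ℝ)) = (-a)⁻¹ * (-a) := by
      simp [ha, mul_comm]
    rw [h1, inv_mul_cancel₀ (by linarith : -a ≠ 0)]
  · intro x q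
    have hgxq : g (x, q) ∈ Qset := subset_convexHull ℝ _ (Set.mem_range_self (x, q))
    have hkey := hφQ _ hgxq
    rw [hcz] at hkey
    have hconst : (ContinuousMap.const (WeakStarBall E) (dist (u x) (u q) ^ p))
        = (dist (u x) (u q) ^ p) • (1 : C(WeakStarBall E, ℝ)) := by
      ext α
      simp
    have hφg : φ (g (x, q)) = dist (u x) (u q) ^ p * a
        - C ^ p * φ (absPowMap hp0 (x - q)) := by
      show φ (ContinuousMap.const _ (dist (u x) (u q) ^ p)
        - C ^ p • absPowMap hp0 (x - q)) = _
      rw [map_sub, _root_.map_smul, smul_eq_mul, hconst, _root_.map_smul, smul_eq_mul, ha]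
    rw [hφg] at hkey
    set b : ℝ := φ (absPowMap hp0 (x - q)) with hb
    have hkey2 : C ^ p * b ≤ dist (u x) (u q) ^ p * a := by linarith
    have hΛh : ((-a)⁻¹ • (-φ)) (absPowMap hp0 (x - q)) = (-b) / (-a) := by
      simp [hb, div_eq_inv_mul, mul_comm]
    rw [hΛh]
    rw [mul_div_assoc']
    rw [le_div_iff₀ hapos]
    nlinarith [hkey2]

end functional

section arith

lemma sum_min_max (ε : ℝ) (hε : 0 < ε) : ∀ (N : ℕ) (y : ℝ), 0 ≤ y →
    ∑ k ∈ Finset.range N, min (max (y - (k : ℝ) * ε) 0) ε = min y ((N : ℝ) * ε) := by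
  intro N
  induction N with
  | zero =>
    intro y hy
    simp [min_eq_right hy]
  | succ n ih =>
    intro y hy
    rw [Finset.sum_range_succ, ih y hy]
    push_cast
    rcases le_total y ((n : ℝ) * ε) with hc | hc
    · have h1 : y - (n : ℝ) * ε ≤ 0 := by linarith
      rw [max_eq_right h1, min_eq_left hε.le, min_eq_left hc,
        min_eq_left (by nlinarith : y ≤ ((n : ℝ) + 1) * ε), add_zero]
    · have h1 : 0 ≤ y - (n : ℝ) * ε := by linarith
      rw [max_eq_left h1, min_eq_right hc]
      rcases le_total (y - (n : ℝ) * ε) ε with hc2 | hc2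
      · rw [min_eq_left hc2, min_eq_left (by nlinarith : y ≤ ((n : ℝ) + 1) * ε)]
        ring
      · rw [min_eq_right hc2, min_eq_right (by nlinarith : ((n : ℝ) + 1) * ε ≤ y)]
        ring

lemma indicator_sum_le (ε : ℝ) (hε : 0 < ε) (N : ℕ) (y : ℝ) (hy : 0 ≤ y) :
    ∑ k ∈ Finset.Ico 1 N, (if (k : ℝ) * ε ≤ y then ε else 0) ≤ y := by
  classical
  rw [← Finset.sum_filter]
  set S : Finset ℕ := (Finset.Ico 1 N).filter (fun k => (k : ℝ) * ε ≤ y) with hS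
  have hsub : S ⊆ Finset.Icc 1 ⌊y / ε⌋₊ := by
    intro k hk
    rw [hS, Finset.mem_filter, Finset.mem_Ico] at hk
    obtain ⟨⟨h1, _⟩, h2⟩ := hk
    refine Finset.mem_Icc.mpr ⟨h1, Nat.le_floor ?_⟩
    rw [le_div_iff₀ hε]
    linarith
  have hcard : S.card ≤ ⌊y / ε⌋₊ := by
    have := Finset.card_le_card hsub
    simpa [Nat.card_Icc] using this
  calc ∑ _k ∈ S, ε = (S.card : ℝ) * ε := by rw [Finset.sum_const, nsmul_eq_mul]
    _ ≤ (⌊y / ε⌋₊ : ℝ) * ε := by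
        apply mul_le_mul_of_nonneg_right _ hε.le
        exact_mod_cast hcard
    _ ≤ (y / ε) * ε := mul_le_mul_of_nonneg_right (Nat.floor_le (by positivity)) hε.le
    _ = y := by field_simp

end arith

section riesz
variable {E : Type*} [NormedAddCommGroup E] [NormedSpace ℝ E]

lemma exists_riesz_measure (Λ : C(WeakStarBall E, ℝ) →L[ℝ] ℝ)
    (hpos : ∀ f : C(WeakStarBall E, ℝ), (∀ α, 0 ≤ f α) → 0 ≤ Λ f)
    (hΛ1 : Λ (1 : C(WeakStarBall E, ℝ)) = 1) :
    ∃ ν : Measure (WeakStarBall E), IsProbabilityMeasure ν ∧ ν.Regular ∧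
      ∀ f : C(WeakStarBall E, ℝ), (∀ α, 0 ≤ f α) → Λ f ≤ ∫ α, f α ∂ν := by
  classical
  haveI : WeaklyLocallyCompactSpace (WeakStarBall E) :=
    ⟨fun _ => ⟨Set.univ, isCompact_univ, Filter.univ_mem⟩⟩
  -- monotonicity of Λ
  have hmono : ∀ f f' : C(WeakStarBall E, ℝ), (∀ α, f α ≤ f' α) → Λ f ≤ Λ f' := by
    intro f f' hff
    have h0 : ∀ α, 0 ≤ (f' - f) α := by
      intro α
      simp [sub_nonneg, hff α]
    have := hpos _ h0
    rw [map_sub] at this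
    linarith
  -- admissible sets
  set Adm : Set (WeakStarBall E) → Set ℝ := fun s =>
    {r | ∃ f : C(WeakStarBall E, ℝ), (∀ α, 0 ≤ f α) ∧ (∀ α ∈ s, 1 ≤ f α) ∧ Λ f = r}
    with hAdm
  have hAdm_ne : ∀ s, (Adm s).Nonempty := by
    intro s
    exact ⟨Λ 1, 1, fun α => by simp, fun α _ => by simp, rfl⟩
  have hAdm_nonneg : ∀ s, ∀ r ∈ Adm s, (0:ℝ) ≤ r := by
    rintro s r ⟨f, hf0, -, rfl⟩
    exact hpos f hf0
  have hbdd : ∀ s, BddBelow (Adm s) := fun s => ⟨0, fun r hr => hAdm_nonneg s r hr⟩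
  have hsInf_nonneg : ∀ s, 0 ≤ sInf (Adm s) := fun s =>
    le_csInf (hAdm_ne s) (hAdm_nonneg s)
  have hsInf_le_one : ∀ s, sInf (Adm s) ≤ 1 := by
    intro s
    have : Λ 1 ∈ Adm s := ⟨1, fun α => by simp, fun α _ => by simp, rfl⟩
    have h := csInf_le (hbdd s) this
    rwa [hΛ1] at h
  -- real-valued subadditivity
  have hsub : ∀ s t : Set (WeakStarBall E),
      sInf (Adm (s ∪ t)) ≤ sInf (Adm s) + sInf (Adm t) := by
    intro s t
    apply le_of_forall_pos_le_add
    intro ε hε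
    obtain ⟨r₁, hr₁mem, hr₁⟩ := Real.lt_sInf_add_pos (hAdm_ne s) (half_pos hε)
    obtain ⟨r₂, hr₂mem, hr₂⟩ := Real.lt_sInf_add_pos (hAdm_ne t) (half_pos hε)
    obtain ⟨f₁, hf₁0, hf₁1, hf₁Λ⟩ := hr₁mem
    obtain ⟨f₂, hf₂0, hf₂1, hf₂Λ⟩ := hr₂mem
    have hmem : Λ (f₁ + f₂) ∈ Adm (s ∪ t) := by
      refine ⟨f₁ + f₂, fun α => ?_, fun α hα => ?_, rfl⟩
      · have := hf₁0 α; have := hf₂0 α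
        simp only [ContinuousMap.add_apply]
        linarith
      · rcases hα with hα | hα
        · have := hf₁1 α hα; have := hf₂0 α
          simp only [ContinuousMap.add_apply]
          linarith
        · have := hf₂1 α hα; have := hf₁0 α
          simp only [ContinuousMap.add_apply]
          linarith
    have h1 := csInf_le (hbdd (s ∪ t)) hmem
    rw [map_add, hf₁Λ, hf₂Λ] at h1
    linarith
  -- additivity on disjoint closed sets
  have hadd : ∀ s t : Set (WeakStarBall E), Disjoint s t → IsClosed s → IsClosed t →
      sInf (Adm (s ∪ t)) = sInf (Adm s) + sInf (Adm t) := by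
    intro s t hd hs ht
    refine le_antisymm (hsub s t) ?_
    apply le_csInf (hAdm_ne (s ∪ t))
    rintro r ⟨f, hf0, hf1, rfl⟩
    obtain ⟨χ, hχt, hχs, hχ01⟩ := exists_continuous_zero_one_of_isClosed ht hs hd.symm
    have hχ0 : ∀ α, 0 ≤ χ α := fun α => (hχ01 α).1
    have hχ1 : ∀ α, χ α ≤ 1 := fun α => (hχ01 α).2
    have hmem1 : Λ (f * χ) ∈ Adm s := by
      refine ⟨f * χ, fun α => ?_, fun α hα => ?_, rfl⟩
      · simp only [ContinuousMap.mul_apply]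
        exact mul_nonneg (hf0 α) (hχ0 α)
      · have hχα : χ α = 1 := hχs hα
        have := hf1 α (Set.mem_union_left _ hα)
        simp only [ContinuousMap.mul_apply, hχα, mul_one]
        exact this
    have hmem2 : Λ (f * (1 - χ)) ∈ Adm t := by
      refine ⟨f * (1 - χ), fun α => ?_, fun α hα => ?_, rfl⟩
      · simp only [ContinuousMap.mul_apply, ContinuousMap.sub_apply,
          ContinuousMap.one_apply]
        exact mul_nonneg (hf0 α) (by linarith [hχ1 α])
      · have hχα : χ α = 0 := hχt hα
        have := hf1 α (Set.mem_union_right _ hα)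
        simp only [ContinuousMap.mul_apply, ContinuousMap.sub_apply,
          ContinuousMap.one_apply, hχα, sub_zero, mul_one]
        exact this
    have h1 := csInf_le (hbdd s) hmem1
    have h2 := csInf_le (hbdd t) hmem2
    have h3 : f * χ + f * (1 - χ) = f := by
      ext α
      simp only [ContinuousMap.add_apply, ContinuousMap.mul_apply,
        ContinuousMap.sub_apply, ContinuousMap.one_apply]
      ring
    have h4 : Λ (f * χ) + Λ (f * (1 - χ)) = Λ f := by
      rw [← map_add, h3]
    linarith
  -- the content
  set cont : Content (WeakStarBall E) :=
    { toFun := fun s => Real.toNNReal (sInf (Adm s.1))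
      mono' := by
        intro K₁ K₂ hK
        beta_reduce
        apply Real.toNNReal_mono
        apply csInf_le_csInf (hbdd _) (hAdm_ne _)
        rintro r ⟨f, h0, h1, hΛf⟩
        exact ⟨f, h0, fun α hα => h1 α (hK hα), hΛf⟩
      sup_disjoint' := by
        intro K₁ K₂ hd h₁ h₂
        beta_reduce
        have heq := hadd K₁.1 K₂.1 hd h₁ h₂
        rw [show (K₁ ⊔ K₂).carrier = K₁.carrier ∪ K₂.carrier from rfl]
        rw [heq, Real.toNNReal_add (hsInf_nonneg _) (hsInf_nonneg _)]
      sup_le' := by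
        intro K₁ K₂
        beta_reduce
        have := hsub K₁.1 K₂.1
        have h' : Real.toNNReal (sInf (Adm (K₁.1 ∪ K₂.1)))
            ≤ Real.toNNReal (sInf (Adm K₁.1) + sInf (Adm K₂.1)) :=
          Real.toNNReal_mono this
        rw [Real.toNNReal_add (hsInf_nonneg _) (hsInf_nonneg _)] at h'
        exact h' } with hcont
  set ν : Measure (WeakStarBall E) := cont.measure with hν
  -- content value at univ is 1
  have hcont_univ : cont.toFun ⟨Set.univ, isCompact_univ⟩ = 1 := by
    have h1 : sInf (Adm Set.univ) = 1 := by
      refine le_antisymm (hsInf_le_one _) ?_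
      apply le_csInf (hAdm_ne _)
      rintro r ⟨f, hf0, hf1, rfl⟩
      have := hmono 1 f (fun α => by simpa using hf1 α (Set.mem_univ α))
      rwa [hΛ1] at this
    simp [hcont, h1]
  -- ν is a probability measure
  have hνuniv : ν Set.univ = 1 := by
    rw [hν, cont.measure_apply MeasurableSet.univ]
    refine le_antisymm ?_ ?_
    · have := cont.outerMeasure_le ⟨Set.univ, isOpen_univ⟩ ⟨Set.univ, isCompact_univ⟩
        subset_rfl
      rw [show ∀ K, cont K = ((cont.toFun K : ℝ≥0) : ℝ≥0∞) from fun _ => rfl, hcont_univ] at this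
      simpa using this
    · have := cont.le_outerMeasure_compacts ⟨Set.univ, isCompact_univ⟩
      rw [show ∀ K, cont K = ((cont.toFun K : ℝ≥0) : ℝ≥0∞) from fun _ => rfl, hcont_univ] at this
      simpa using this
  haveI hprob : IsProbabilityMeasure ν := ⟨hνuniv⟩
  -- content of a compact set is below its measure
  have hcont_le_ν : ∀ (F : Set (WeakStarBall E)) (hF : IsClosed F),
      (sInf (Adm F) : ℝ) ≤ (ν F).toReal := by
    intro F hF
    have h1 : (cont ⟨F, hF.isCompact⟩ : ℝ≥0∞) ≤ ν F := by
      rw [hν, cont.measure_apply hF.measurableSet]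
      exact cont.le_outerMeasure_compacts ⟨F, hF.isCompact⟩
    have h2 : ν F ≠ ⊤ := (measure_lt_top ν F).ne
    have h3 := ENNReal.toReal_mono h2 h1
    rw [show ∀ K, cont K = ((cont.toFun K : ℝ≥0) : ℝ≥0∞) from fun _ => rfl] at h3
    simpa [hcont, Real.coe_toNNReal _ (hsInf_nonneg F)] using h3
  refine ⟨ν, hprob, cont.regular, ?_⟩
  -- THE KEY INEQUALITY : Λ f ≤ ∫ f dν
  intro f hf0
  apply le_of_forall_pos_le_add
  intro ε hε
  set N : ℕ := ⌈‖f‖ / ε⌉₊ + 1 with hN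
  have hN0 : 0 < N := Nat.succ_pos _
  have hNε : ∀ α, f α ≤ (N : ℝ) * ε := by
    intro α
    have h1 : f α ≤ ‖f‖ := (le_abs_self _).trans (f.norm_coe_le_norm α)
    have h2 : ‖f‖ / ε ≤ (⌈‖f‖ / ε⌉₊ : ℝ) := Nat.le_ceil _
    have h3 : ‖f‖ ≤ (⌈‖f‖ / ε⌉₊ : ℝ) * ε := by
      rw [div_le_iff₀ hε] at h2
      exact h2
    have h4 : (N : ℝ) = (⌈‖f‖ / ε⌉₊ : ℝ) + 1 := by
      rw [hN]
      push_cast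
      ring
    rw [h4]
    nlinarith
  set g : ℕ → C(WeakStarBall E, ℝ) := fun k =>
    ⟨fun α => min (max (f α - (k : ℝ) * ε) 0) ε,
      ((f.continuous.sub continuous_const).max continuous_const).min continuous_const⟩
    with hg
  have hg_apply : ∀ k α, g k α = min (max (f α - (k : ℝ) * ε) 0) ε := fun k α => rfl
  have hgsum : ∀ α, ∑ k ∈ Finset.range N, g k α = f α := by
    intro α
    calc ∑ k ∈ Finset.range N, g k α = min (f α) ((N : ℝ) * ε) :=
          sum_min_max ε hε N (f α) (hf0 α)
      _ = f α := min_eq_left (hNε α)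
  have hfsum : f = ∑ k ∈ Finset.range N, g k := by
    ext α
    rw [ContinuousMap.sum_apply]
    exact (hgsum α).symm
  have hΛsum : Λ f = ∑ k ∈ Finset.range N, Λ (g k) := by
    conv_lhs => rw [hfsum]
    exact map_sum Λ _ _
  set F : ℕ → Set (WeakStarBall E) := fun k => {α | (k : ℝ) * ε ≤ f α} with hF
  have hFclosed : ∀ k, IsClosed (F k) := fun k => isClosed_le continuous_const f.continuous
  have hFmeas : ∀ k, MeasurableSet (F k) := fun k => (hFclosed k).measurableSet
  have hgk_bound : ∀ k, Λ (g k) ≤ ε * (ν (F k)).toReal := by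
    intro k
    have hstep : ∀ r ∈ Adm (F k), Λ (g k) ≤ ε * r := by
      rintro r ⟨f', h0, h1, rfl⟩
      have hle : ∀ α, g k α ≤ ε * f' α := by
        intro α
        by_cases hα : α ∈ F k
        · have hf'1 := h1 α hα
          have hgle : g k α ≤ ε := min_le_right _ _
          nlinarith
        · have hnotin : ¬ ((k : ℝ) * ε ≤ f α) := hα
          push_neg at hnotin
          have hneg : f α - (k : ℝ) * ε ≤ 0 := by linarith
          have hz : g k α = 0 := by
            rw [hg_apply, max_eq_right hneg, min_eq_left hε.le]
          rw [hz]
          exact mul_nonneg hε.le (h0 α)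
      have hmle := hmono (g k) (ε • f') (fun α => by simpa using hle α)
      rwa [_root_.map_smul, smul_eq_mul] at hmle
    have h2 : Λ (g k) ≤ ε * sInf (Adm (F k)) := by
      have hdiv : Λ (g k) / ε ≤ sInf (Adm (F k)) := by
        apply le_csInf (hAdm_ne _)
        intro r hr
        rw [div_le_iff₀ hε]
        have := hstep r hr
        linarith
      calc Λ (g k) = (Λ (g k) / ε) * ε := by field_simp
        _ ≤ sInf (Adm (F k)) * ε := mul_le_mul_of_nonneg_right hdiv hε.le
        _ = ε * sInf (Adm (F k)) := mul_comm _ _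
    calc Λ (g k) ≤ ε * sInf (Adm (F k)) := h2
      _ ≤ ε * (ν (F k)).toReal :=
          mul_le_mul_of_nonneg_left (hcont_le_ν _ (hFclosed k)) hε.le
  have hfint : Integrable (fun α => f α) ν :=
    f.continuous.integrable_of_hasCompactSupport (isClosed_tsupport _).isCompact
  have hind : ∀ k : ℕ, Integrable (Set.indicator (F k) (fun _ => ε)) ν := fun k =>
    (integrable_const ε).indicator (hFmeas k)
  have hpoint : ∀ α, ∑ k ∈ Finset.Ico 1 N, Set.indicator (F k) (fun _ => ε) α ≤ f α := by
    intro α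
    refine le_trans (le_of_eq ?_) (indicator_sum_le ε hε N (f α) (hf0 α))
    apply Finset.sum_congr rfl
    intro k _
    rw [Set.indicator_apply]
    simp only [hF, Set.mem_setOf_eq]
  have hsum_int : ∫ α, (∑ k ∈ Finset.Ico 1 N, Set.indicator (F k) (fun _ => ε) α) ∂ν
      = ∑ k ∈ Finset.Ico 1 N, ε * (ν (F k)).toReal := by
    rw [integral_finset_sum _ (fun k _ => hind k)]
    apply Finset.sum_congr rfl
    intro k _
    rw [integral_indicator_const _ (hFmeas k), measureReal_def, smul_eq_mul, mul_comm]
  have hintle : ∑ k ∈ Finset.Ico 1 N, ε * (ν (F k)).toReal ≤ ∫ α, f α ∂ν := by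
    rw [← hsum_int]
    exact integral_mono (integrable_finset_sum _ (fun k _ => hind k)) hfint hpoint
  have hF0 : ε * (ν (F 0)).toReal ≤ ε := by
    have h1 : ν (F 0) ≤ 1 := le_of_le_of_eq (measure_mono (Set.subset_univ _)) hνuniv
    have h2 : (ν (F 0)).toReal ≤ 1 := by
      have := ENNReal.toReal_mono (by simp : (1 : ℝ≥0∞) ≠ ⊤) h1
      simpa using this
    nlinarith
  have hsplit : ∑ k ∈ Finset.range N, Λ (g k)
      = Λ (g 0) + ∑ k ∈ Finset.Ico 1 N, Λ (g k) := by
    rw [Finset.range_eq_Ico, Finset.sum_eq_sum_Ico_succ_bot hN0]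
  calc Λ f = Λ (g 0) + ∑ k ∈ Finset.Ico 1 N, Λ (g k) := by rw [hΛsum, hsplit]
    _ ≤ ε * (ν (F 0)).toReal + ∑ k ∈ Finset.Ico 1 N, ε * (ν (F k)).toReal := by
        apply add_le_add (hgk_bound 0)
        exact Finset.sum_le_sum (fun k _ => hgk_bound k)
    _ ≤ ε + ∫ α, f α ∂ν := add_le_add hF0 hintle
    _ = (∫ α, f α ∂ν) + ε := add_comm _ _

end riesz

section directions
variable {E : Type*} [NormedAddCommGroup E] [NormedSpace ℝ E]
variable {Y : Type*} [MetricSpace Y]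

/-- Forward: summing with constant C implies domination with the same constant. -/
lemma forward_direction {p C : ℝ} (hp : 1 ≤ p) (hC : 0 < C) {u : E → Y}
    (h : ∀ n : ℕ, ∀ x q : Fin n → E,
      (∑ j, dist (u (x j)) (u (q j)) ^ p) ^ (1 / p) ≤
        C * ⨆ α : WeakStarBall E, (∑ j, |α.1 (x j - q j)| ^ p) ^ (1 / p)) :
    ∃ ν : Measure (WeakStarBall E), IsProbabilityMeasure ν ∧ ν.Regular ∧
      ∀ x q : E, dist (u x) (u q) ≤
        C * (∫ α : WeakStarBall E, |α.1 (x - q)| ^ p ∂ν) ^ (1 / p) := by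
  have hp0 : 0 < p := lt_of_lt_of_le one_pos hp
  obtain ⟨Λ, hΛpos, hΛ1, hΛdom⟩ := exists_functional hp hC h
  obtain ⟨ν, hprob, hreg, hint⟩ := exists_riesz_measure Λ hΛpos hΛ1
  refine ⟨ν, hprob, hreg, ?_⟩
  intro x q
  have h1 := hΛdom x q
  have h2 := hint (absPowMap hp0 (x - q)) (fun α => Real.rpow_nonneg (abs_nonneg _) _)
  have h3 : ∫ α, (absPowMap hp0 (x - q)) α ∂ν = ∫ α : WeakStarBall E, |α.1 (x - q)| ^ p ∂ν := rfl
  rw [h3] at h2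
  set I : ℝ := ∫ α : WeakStarBall E, |α.1 (x - q)| ^ p ∂ν with hI
  have hI0 : 0 ≤ I :=
    integral_nonneg (fun α => Real.rpow_nonneg (abs_nonneg _) _)
  have h4 : dist (u x) (u q) ^ p ≤ C ^ p * I := by
    calc dist (u x) (u q) ^ p ≤ C ^ p * Λ (absPowMap hp0 (x - q)) := h1
      _ ≤ C ^ p * I := by
          apply mul_le_mul_of_nonneg_left h2 (Real.rpow_nonneg hC.le _)
  have h5 : dist (u x) (u q) = (dist (u x) (u q) ^ p) ^ (1/p) := by
    rw [← Real.rpow_mul dist_nonneg, mul_one_div_cancel hp0.ne', Real.rpow_one]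
  rw [h5]
  calc (dist (u x) (u q) ^ p) ^ (1/p) ≤ (C ^ p * I) ^ (1/p) :=
        Real.rpow_le_rpow (Real.rpow_nonneg dist_nonneg _) h4 (by positivity)
    _ = C * I ^ (1/p) := by
        rw [Real.mul_rpow (Real.rpow_nonneg hC.le _) hI0, ← Real.rpow_mul hC.le,
          mul_one_div_cancel hp0.ne', Real.rpow_one]

/-- Backward: domination with constant C implies summing with the same constant. -/
lemma backward_direction {p C : ℝ} (hp : 1 ≤ p) (hC : 0 < C) {u : E → Y}
    (ν : Measure (WeakStarBall E)) (hprob : IsProbabilityMeasure ν)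
    (hdom : ∀ x q : E, dist (u x) (u q) ≤
      C * (∫ α : WeakStarBall E, |α.1 (x - q)| ^ p ∂ν) ^ (1 / p)) :
    ∀ n : ℕ, ∀ x q : Fin n → E,
      (∑ j, dist (u (x j)) (u (q j)) ^ p) ^ (1 / p) ≤
        C * ⨆ α : WeakStarBall E, (∑ j, |α.1 (x j - q j)| ^ p) ^ (1 / p) := by
  intro n x q
  have hp0 : 0 < p := lt_of_lt_of_le one_pos hp
  set v : Fin n → E := fun j => x j - q j with hv
  set S : ℝ := ⨆ α : WeakStarBall E, (∑ j, |α.1 (v j)| ^ p) ^ (1/p) with hS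
  have hsum_nonneg : ∀ α : WeakStarBall E, 0 ≤ ∑ j, |α.1 (v j)| ^ p := fun α =>
    Finset.sum_nonneg fun j _ => Real.rpow_nonneg (abs_nonneg _) _
  have hS0 : 0 ≤ S := by
    obtain α := Classical.arbitrary (WeakStarBall E)
    exact le_trans (Real.rpow_nonneg (hsum_nonneg α) _) (le_ciSup (bddAbove_usum_rt hp0 v) α)
  -- each integral is bounded by S^p
  have hint : ∀ j : Fin n, Integrable (fun α : WeakStarBall E => |α.1 (v j)| ^ p) ν :=
    fun j => (continuous_absrpow hp0 (v j)).integrable_of_hasCompactSupport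
      (isClosed_tsupport _).isCompact
  have key : ∀ j, dist (u (x j)) (u (q j)) ^ p
      ≤ C ^ p * ∫ α : WeakStarBall E, |α.1 (v j)| ^ p ∂ν := by
    intro j
    have h1 := hdom (x j) (q j)
    have hI0 : 0 ≤ ∫ α : WeakStarBall E, |α.1 (v j)| ^ p ∂ν :=
      integral_nonneg (fun α => Real.rpow_nonneg (abs_nonneg _) _)
    have h2 := Real.rpow_le_rpow dist_nonneg h1 hp0.le
    rwa [Real.mul_rpow hC.le (Real.rpow_nonneg hI0 _), ← Real.rpow_mul hI0,
      one_div_mul_cancel hp0.ne', Real.rpow_one] at h2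
  have hintsum : ∑ j, dist (u (x j)) (u (q j)) ^ p
      ≤ C ^ p * ∫ α : WeakStarBall E, ∑ j, |α.1 (v j)| ^ p ∂ν := by
    rw [integral_finset_sum _ (fun j _ => hint j), Finset.mul_sum]
    exact Finset.sum_le_sum (fun j _ => key j)
  -- integral bounded by sup
  have hptwise : ∀ α : WeakStarBall E, ∑ j, |α.1 (v j)| ^ p ≤ S ^ p := by
    intro α
    have h1 : (∑ j, |α.1 (v j)| ^ p) ^ (1/p) ≤ S := le_ciSup (bddAbove_usum_rt hp0 v) α
    have h2 := Real.rpow_le_rpow (Real.rpow_nonneg (hsum_nonneg α) _) h1 hp0.le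
    rwa [← Real.rpow_mul (hsum_nonneg α), one_div_mul_cancel hp0.ne',
      Real.rpow_one] at h2
  have hintS : ∫ α : WeakStarBall E, ∑ j, |α.1 (v j)| ^ p ∂ν ≤ S ^ p := by
    calc ∫ α : WeakStarBall E, ∑ j, |α.1 (v j)| ^ p ∂ν
        ≤ ∫ _α : WeakStarBall E, S ^ p ∂ν := by
          apply integral_mono _ (integrable_const _) hptwise
          exact integrable_finset_sum _ (fun j _ => hint j)
      _ = S ^ p := by
          rw [integral_const]
          simp
  have hfinal : ∑ j, dist (u (x j)) (u (q j)) ^ p ≤ (C * S) ^ p := by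
    rw [Real.mul_rpow hC.le hS0]
    calc ∑ j, dist (u (x j)) (u (q j)) ^ p
        ≤ C ^ p * ∫ α : WeakStarBall E, ∑ j, |α.1 (v j)| ^ p ∂ν := hintsum
      _ ≤ C ^ p * S ^ p := mul_le_mul_of_nonneg_left hintS (Real.rpow_nonneg hC.le _)
  have hd0 : 0 ≤ ∑ j, dist (u (x j)) (u (q j)) ^ p :=
    Finset.sum_nonneg fun j _ => Real.rpow_nonneg dist_nonneg _
  have := Real.rpow_le_rpow hd0 hfinal (by positivity : (0:ℝ) ≤ 1/p)
  rwa [← Real.rpow_mul (mul_nonneg hC.le hS0), mul_one_div_cancel hp0.ne',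
    Real.rpow_one] at this

end directions

/-- **Pietsch domination for Lipschitz `p`-`B_{E*}`-summing maps.**
A Lipschitz map `u : E → Y` is Lipschitz `p`-`B_{E*}`-summing iff there are `C > 0` and a
regular Borel probability measure `ν` on the closed unit ball of `E*` with the weak* topology
such that `d(u x, u q) ≤ C (∫ |α (x - q)|^p dν(α))^(1/p)` for all `x q`; moreover `π_p^*(u)`
is the infimum of the constants occurring in the domination. -/
theorem lipschitz_p_summing_iff_pietsch_domination
    {E Y : Type*} [NormedAddCommGroup E] [NormedSpace ℝ E] [MetricSpace Y]
    (p : ℝ) (hp : 1 ≤ p) (u : E → Y) (L : NNReal) (hu : LipschitzWith L u) :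
    ((∃ C > (0 : ℝ), ∀ n : ℕ, ∀ x q : Fin n → E,
        (∑ j, dist (u (x j)) (u (q j)) ^ p) ^ (1 / p) ≤
          C * ⨆ α : WeakStarBall E, (∑ j, |α.1 (x j - q j)| ^ p) ^ (1 / p)) ↔
      (∃ C > (0 : ℝ), ∃ ν : Measure (WeakStarBall E), IsProbabilityMeasure ν ∧ ν.Regular ∧
        ∀ x q : E,
          dist (u x) (u q) ≤ C * (∫ α : WeakStarBall E, |α.1 (x - q)| ^ p ∂ν) ^ (1 / p)))
    ∧
    sInf {C : ℝ | 0 < C ∧ ∀ n : ℕ, ∀ x q : Fin n → E,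
        (∑ j, dist (u (x j)) (u (q j)) ^ p) ^ (1 / p) ≤
          C * ⨆ α : WeakStarBall E, (∑ j, |α.1 (x j - q j)| ^ p) ^ (1 / p)} =
      sInf {C : ℝ | 0 < C ∧ ∃ ν : Measure (WeakStarBall E),
        IsProbabilityMeasure ν ∧ ν.Regular ∧
        ∀ x q : E,
          dist (u x) (u q) ≤ C * (∫ α : WeakStarBall E, |α.1 (x - q)| ^ p ∂ν) ^ (1 / p)} := by
  have hseteq : {C : ℝ | 0 < C ∧ ∀ n : ℕ, ∀ x q : Fin n → E,
        (∑ j, dist (u (x j)) (u (q j)) ^ p) ^ (1 / p) ≤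
          C * ⨆ α : WeakStarBall E, (∑ j, |α.1 (x j - q j)| ^ p) ^ (1 / p)} =
      {C : ℝ | 0 < C ∧ ∃ ν : Measure (WeakStarBall E),
        IsProbabilityMeasure ν ∧ ν.Regular ∧
        ∀ x q : E,
          dist (u x) (u q) ≤ C * (∫ α : WeakStarBall E, |α.1 (x - q)| ^ p ∂ν) ^ (1 / p)} := by
    ext C
    simp only [Set.mem_setOf_eq]
    constructor
    · rintro ⟨hC0, hC⟩
      exact ⟨hC0, forward_direction hp hC0 hC⟩
    · rintro ⟨hC0, ν, hprob, hreg, hdom⟩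
      exact ⟨hC0, backward_direction hp hC0 ν hprob hdom⟩
  constructor
  · constructor
    · rintro ⟨C, hC0, hC⟩
      exact ⟨C, hC0, forward_direction hp hC0 hC⟩
    · rintro ⟨C, hC0, ν, hprob, hreg, hdom⟩
      exact ⟨C, hC0, backward_direction hp hC0 ν hprob hdom⟩
  · rw [hseteq]
end

section
/- Let G be a compact Hausdorff topological group, H a closed translation invariant linear subspace of C(G), Y a metric space, 1 ≤ p < ∞ and u : H → Y a translation invariant Lipschitz p-B_{H*}-summing map. Then the normalized Haar measure σ_G on G is a Pietsch measure for u, i.e. d_Y(u(T),u(S)) ≤ π_p^*(u) (∫_G |T(φ) − S(φ)|^p dσ_G(φ))^{1/p} for all T, S ∈ H. -/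
open MeasureTheory

section AuxPietsch

open Finset ENNReal

set_option linter.unusedSectionVars false

variable {G : Type*} [Group G] [TopologicalSpace G] [IsTopologicalGroup G]
  [CompactSpace G] [T2Space G] [MeasurableSpace G] [BorelSpace G]

theorem aux_rightInv (σ : Measure G) [IsProbabilityMeasure σ] [σ.IsMulLeftInvariant]
    [σ.Regular] : σ.IsMulRightInvariant := by
  constructor
  intro g
  have hhaar : σ.IsHaarMeasure := { }
  set ν := Measure.map (· * g) σ with hν
  have h2 : IsProbabilityMeasure ν := Measure.isProbabilityMeasure_map (measurable_mul_const g).aemeasurable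
  have := Measure.isMulInvariant_eq_smul_of_compactSpace ν σ
  have h4 : ν Set.univ = (ν.haarScalarFactor σ : ℝ≥0∞) * σ Set.univ := by
    conv_lhs => rw [this]
    rw [Measure.smul_apply, ENNReal.smul_def, smul_eq_mul]
  rw [measure_univ, measure_univ, mul_one] at h4
  have hc1 : ν.haarScalarFactor σ = 1 := by
    exact_mod_cast h4.symm
  rw [this, hc1, one_smul]

theorem aux_unifCont (g : C(G, ℝ)) {ε : ℝ} (hε : 0 < ε) :
    ∃ V : Set G, IsOpen V ∧ (1:G) ∈ V ∧ ∀ a b : G, a * b⁻¹ ∈ V → |g a - g b| ≤ ε := by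
  have hcont : Continuous fun q : G × G => g (q.1 * q.2) - g q.2 :=
    (g.continuous.comp (continuous_fst.mul continuous_snd)).sub
      (g.continuous.comp continuous_snd)
  set W : Set (G × G) := {q | |g (q.1 * q.2) - g q.2| < ε} with hW
  have hWopen : IsOpen W := by
    have : W = (fun q : G × G => g (q.1 * q.2) - g q.2) ⁻¹' (Set.Ioo (-ε) ε) := by
      ext q; simp [hW, abs_lt, Set.mem_Ioo]
    rw [this]; exact isOpen_Ioo.preimage hcont
  -- for each b, choose neighborhoods
  have key : ∀ b : G, ∃ Vb Ub : Set G, IsOpen Vb ∧ IsOpen Ub ∧ (1:G) ∈ Vb ∧ b ∈ Ub ∧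
      Vb ×ˢ Ub ⊆ W := by
    intro b
    have hmem : ((1:G), b) ∈ W := by simp [hW, hε]
    rcases (isOpen_prod_iff.1 hWopen) 1 b hmem with ⟨u, v, hu, hv, h1u, hbv, huv⟩
    exact ⟨u, v, hu, hv, h1u, hbv, huv⟩
  choose Vb Ub hVopen hUopen h1V hbU hsub using key
  obtain ⟨t, ht⟩ := IsCompact.elim_finite_subcover isCompact_univ Ub hUopen
    (fun b _ => Set.mem_iUnion.2 ⟨b, hbU b⟩)
  refine ⟨⋂ b ∈ t, Vb b, isOpen_biInter_finset (fun b _ => hVopen b), ?_, ?_⟩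
  · exact Set.mem_biInter fun b _ => h1V b
  · intro a b hab
    obtain ⟨b₀, hb₀t, hb₀⟩ : ∃ b₀ ∈ t, b ∈ Ub b₀ := by
      have := ht (Set.mem_univ b); simpa using this
    have : (a * b⁻¹, b) ∈ W := hsub b₀ ⟨Set.mem_iInter₂.1 hab b₀ hb₀t, hb₀⟩
    simp only [hW, Set.mem_setOf_eq, inv_mul_cancel_right] at this
    exact this.le

theorem aux_convex (σ : Measure G) [IsProbabilityMeasure σ] [σ.IsMulLeftInvariant] [σ.Regular]
    (g : C(G, ℝ)) {ε : ℝ} (hε : 0 < ε) :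
    ∃ (k : ℕ) (ψ : Fin k → G) (w : Fin k → ℝ), (∀ i, 0 ≤ w i) ∧ (∑ i, w i) = 1 ∧
      ∀ φ : G, ∑ i, w i * g (ψ i * φ) ≤ (∫ x, g x ∂σ) + ε := by
  classical
  have hri := aux_rightInv σ
  obtain ⟨V, hVopen, hV1, hV⟩ := aux_unifCont g hε
  set U : G → Set G := fun x => (Homeomorph.mulRight x) '' V with hU
  have hUopen : ∀ x : G, IsOpen (U x) := fun x => (Homeomorph.mulRight x).isOpen_image.2 hVopen
  have hxU : ∀ x : G, x ∈ U x := fun x => ⟨1, hV1, by simp⟩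
  obtain ⟨t, ht⟩ := isCompact_univ.elim_finite_subcover U hUopen
    (fun x _ => Set.mem_iUnion.2 ⟨x, hxU x⟩)
  set k := t.card with hk
  set ψ : Fin k → G := fun i => (t.equivFin.symm i : G) with hψ
  set B : Fin k → Set G := fun i => U (ψ i) \ ⋃ j : Fin k, ⋃ _ : j < i, U (ψ j) with hB
  have hBmeas : ∀ i, MeasurableSet (B i) := fun i =>
    ((hUopen _).measurableSet).diff
      (MeasurableSet.iUnion fun j => MeasurableSet.iUnion fun _ => (hUopen _).measurableSet)
  have hBsub : ∀ i, B i ⊆ U (ψ i) := fun i => Set.diff_subset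
  have hdisj : Pairwise (Function.onFun Disjoint B) := by
    intro i j hij
    rcases lt_or_gt_of_ne hij with h | h
    · exact Set.disjoint_left.2 fun x hxi hxj =>
        hxj.2 (Set.mem_iUnion.2 ⟨i, Set.mem_iUnion.2 ⟨h, hxi.1⟩⟩)
    · exact Set.disjoint_left.2 fun x hxi hxj =>
        hxi.2 (Set.mem_iUnion.2 ⟨j, Set.mem_iUnion.2 ⟨h, hxj.1⟩⟩)
  have hBcover : ∀ x : G, ∃ i, x ∈ B i := by
    intro x
    have hx : (Finset.univ.filter fun i => x ∈ U (ψ i)).Nonempty := by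
      obtain ⟨b, hb, hxb⟩ : ∃ b ∈ t, x ∈ U b := by
        have := ht (Set.mem_univ x); simpa using this
      refine ⟨t.equivFin ⟨b, hb⟩, Finset.mem_filter.2 ⟨Finset.mem_univ _, ?_⟩⟩
      simpa [hψ, Equiv.symm_apply_apply] using hxb
    obtain ⟨i, hi, hmin⟩ := Finset.exists_min_image _ id hx
    refine ⟨i, (Finset.mem_filter.1 hi).2, ?_⟩
    intro hmem
    obtain ⟨j, hj⟩ := Set.mem_iUnion.1 hmem
    obtain ⟨hji, hxj⟩ := Set.mem_iUnion.1 hj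
    exact absurd (hmin j (Finset.mem_filter.2 ⟨Finset.mem_univ _, hxj⟩)) (not_le.2 hji)
  have hBuniv : (⋃ i, B i) = Set.univ := Set.eq_univ_iff_forall.2
    fun x => Set.mem_iUnion.2 (hBcover x)
  set w : Fin k → ℝ := fun i => (σ (B i)).toReal with hw
  have hw0 : ∀ i, 0 ≤ w i := fun i => ENNReal.toReal_nonneg
  have hsum1 : (∑ i, w i) = 1 := by
    have h1 : (∑' i : Fin k, σ (B i)) = 1 := by
      rw [← measure_iUnion hdisj hBmeas, hBuniv, measure_univ]
    rw [tsum_fintype] at h1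
    have := congrArg ENNReal.toReal h1
    rwa [ENNReal.toReal_sum (fun i _ => measure_ne_top σ (B i))] at this
  refine ⟨k, ψ, w, hw0, hsum1, fun φ => ?_⟩
  have hFcont : Continuous fun x : G => g (x * φ) :=
    g.continuous.comp (continuous_mul_right φ)
  have hFint : Integrable (fun x : G => g (x * φ)) σ :=
    hFcont.integrable_of_hasCompactSupport (HasCompactSupport.of_compactSpace _)
  have hconst_int : ∀ (c : ℝ), Integrable (fun _ : G => c) σ := fun c => integrable_const c
  -- pointwise bound on each piece
  have hpt : ∀ i, ∀ x ∈ B i, g (ψ i * φ) ≤ g (x * φ) + ε := by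
    intro i x hx
    obtain ⟨v, hv, hvx⟩ := hBsub i hx
    have hmem : (x * φ) * (ψ i * φ)⁻¹ ∈ V := by
      have : (x * φ) * (ψ i * φ)⁻¹ = x * (ψ i)⁻¹ := by group
      rw [this, ← hvx]
      simpa using hv
    have := hV _ _ hmem
    have h2 : g (ψ i * φ) - g (x * φ) ≤ ε := by
      have := (abs_le.1 this).1
      linarith
    linarith
  have step1 : ∀ i, w i * g (ψ i * φ) ≤ ∫ x in B i, (g (x * φ) + ε) ∂σ := by
    intro i
    have hle : ∫ x in B i, g (ψ i * φ) ∂σ ≤ ∫ x in B i, (g (x * φ) + ε) ∂σ := by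
      refine setIntegral_mono_on (integrableOn_const (measure_ne_top σ _))
        ((hFint.add (hconst_int ε)).integrableOn) (hBmeas i) ?_
      intro x hx; exact hpt i x hx
    calc w i * g (ψ i * φ) = ∫ _ in B i, g (ψ i * φ) ∂σ := by
          rw [setIntegral_const]; rfl
      _ ≤ _ := hle
  calc ∑ i, w i * g (ψ i * φ) ≤ ∑ i, ∫ x in B i, (g (x * φ) + ε) ∂σ :=
        Finset.sum_le_sum fun i _ => step1 i
    _ = ∫ x in ⋃ i, B i, (g (x * φ) + ε) ∂σ :=
        (integral_iUnion_fintype hBmeas hdisj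
          (fun i => (hFint.add (hconst_int ε)).integrableOn)).symm
    _ = ∫ x, (g (x * φ) + ε) ∂σ := by rw [hBuniv, Measure.restrict_univ]
    _ = (∫ x, g (x * φ) ∂σ) + ∫ _, ε ∂σ := integral_add hFint (hconst_int ε)
    _ = (∫ x, g x ∂σ) + ε := by
        rw [integral_mul_right_eq_self (fun x => g x) φ]
        simp [integral_const]

theorem aux_discrete (σ : Measure G) [IsProbabilityMeasure σ] [σ.IsMulLeftInvariant] [σ.Regular]
    (g : C(G, ℝ)) (hg : ∀ x, 0 ≤ g x) {ε : ℝ} (hε : 0 < ε) :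
    ∃ (n : ℕ), 0 < n ∧ ∃ ψ : Fin n → G,
      ∀ φ : G, ∑ j, g (ψ j * φ) ≤ n * ((∫ x, g x ∂σ) + ε) := by
  classical
  obtain ⟨k, ψb, w, hw0, hw1, hwle⟩ := aux_convex σ g (half_pos hε)
  set I := ∫ x, g x ∂σ with hI
  have hI0 : 0 ≤ I := integral_nonneg fun x => hg x
  set Bd : ℝ := ‖g‖ with hBd
  have hBd0 : 0 ≤ Bd := norm_nonneg g
  have hgB : ∀ x, g x ≤ Bd := fun x => (le_abs_self _).trans (by
    simpa [Real.norm_eq_abs] using g.norm_coe_le_norm x)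
  set n₀ : ℕ := ⌈2 * k * Bd / ε⌉₊ + 1 with hn₀
  have hn₀1 : 1 ≤ n₀ := Nat.le_add_left 1 _
  have hn₀big : 2 * k * Bd / ε ≤ (n₀ : ℝ) := by
    rw [hn₀]; push_cast; linarith [Nat.le_ceil (2 * (k:ℝ) * Bd / ε)]
  have hkB : (k : ℝ) * Bd ≤ (n₀ : ℝ) * (ε / 2) := by
    rw [div_le_iff₀ hε] at hn₀big; nlinarith
  set m : Fin k → ℕ := fun i => ⌈(n₀ : ℝ) * w i⌉₊ with hm
  set n : ℕ := ∑ i, m i with hn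
  have hmlow : ∀ i, (n₀ : ℝ) * w i ≤ m i := fun i => Nat.le_ceil _
  have hmhigh : ∀ i, (m i : ℝ) ≤ (n₀ : ℝ) * w i + 1 := fun i =>
    (Nat.ceil_lt_add_one (mul_nonneg (by positivity) (hw0 i))).le
  have hncast : (n : ℝ) = ∑ i, (m i : ℝ) := by rw [hn]; push_cast; rfl
  have hnlow : (n₀ : ℝ) ≤ (n : ℝ) := by
    rw [hncast]
    calc (n₀:ℝ) = ∑ i, (n₀:ℝ) * w i := by rw [← Finset.mul_sum, hw1, mul_one]
      _ ≤ ∑ i, (m i : ℝ) := Finset.sum_le_sum fun i _ => hmlow i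
  have hnpos : 0 < n := by
    have h1 : (1:ℝ) ≤ (n:ℝ) := le_trans (by exact_mod_cast hn₀1) hnlow
    exact_mod_cast lt_of_lt_of_le zero_lt_one h1
  have hcard : Fintype.card ((i : Fin k) × Fin (m i)) = n := by
    simp [Fintype.card_sigma, hn]
  let e := Fintype.equivFinOfCardEq hcard
  refine ⟨n, hnpos, fun j => ψb (e.symm j).1, fun φ => ?_⟩
  have hsum : ∑ j : Fin n, g (ψb (e.symm j).1 * φ)
      = ∑ i : Fin k, (m i : ℝ) * g (ψb i * φ) := by
    rw [← Equiv.sum_comp e (fun j => g (ψb (e.symm j).1 * φ))]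
    simp only [Equiv.symm_apply_apply]
    rw [← Finset.univ_sigma_univ, Finset.sum_sigma]
    simp [Finset.sum_const, nsmul_eq_mul]
  rw [hsum]
  have hb1 : ∑ i : Fin k, (m i : ℝ) * g (ψb i * φ)
      ≤ ∑ i : Fin k, ((n₀ : ℝ) * w i + 1) * g (ψb i * φ) :=
    Finset.sum_le_sum fun i _ => mul_le_mul_of_nonneg_right (hmhigh i) (hg _)
  have hb2 : ∑ i : Fin k, ((n₀ : ℝ) * w i + 1) * g (ψb i * φ)
      = (n₀ : ℝ) * (∑ i, w i * g (ψb i * φ)) + ∑ i, g (ψb i * φ) := by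
    rw [Finset.mul_sum, ← Finset.sum_add_distrib]
    congr 1; ext i; ring
  have hb3 : ∑ i : Fin k, g (ψb i * φ) ≤ (k : ℝ) * Bd := by
    calc ∑ i : Fin k, g (ψb i * φ) ≤ ∑ _i : Fin k, Bd :=
          Finset.sum_le_sum fun i _ => hgB _
      _ = (k : ℝ) * Bd := by simp [Finset.sum_const, nsmul_eq_mul]
  have hb4 : (n₀ : ℝ) * (∑ i, w i * g (ψb i * φ)) ≤ (n₀ : ℝ) * (I + ε / 2) :=
    mul_le_mul_of_nonneg_left (hwle φ) (by positivity)
  have hn₀n : (n₀ : ℝ) * (I + ε) ≤ (n : ℝ) * (I + ε) :=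
    mul_le_mul_of_nonneg_right hnlow (by positivity)
  nlinarith [hb1, hb2, hb3, hb4, hkB, hn₀n]

theorem aux_dual {H : Submodule ℝ C(G, ℝ)} (α : H →L[ℝ] ℝ) (hα : @norm _ (ContinuousLinearMap.hasOpNorm (𝕜 := ℝ) (𝕜₂ := ℝ) (σ₁₂ := RingHom.id ℝ) (E := H) (F := ℝ)) α ≤ 1)
    {p : ℝ} (hp : 1 ≤ p) {n : ℕ} (R : Fin n → ↥H) {M : ℝ} (hM : 0 ≤ M)
    (hRM : ∀ φ : G, ∑ j, |((R j : C(G, ℝ))) φ| ^ p ≤ M) :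
    ∑ j, |α (R j)| ^ p ≤ M := by
  classical
  have hp0 : (0:ℝ) < p := lt_of_lt_of_le zero_lt_one hp
  set x : Fin n → ℝ := fun j => α (R j) with hx
  set A : ℝ := ∑ j, |x j| ^ p with hA
  have hA0 : 0 ≤ A := Finset.sum_nonneg fun j _ => Real.rpow_nonneg (abs_nonneg _) p
  rcases eq_or_lt_of_le hA0 with hA0' | hApos
  · rw [← hA0']; exact hM
  set c : Fin n → ℝ := fun j => Real.sign (x j) * |x j| ^ (p - 1) with hc
  have hcx : ∀ j, c j * x j = |x j| ^ p := by
    intro j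
    rcases lt_trichotomy (x j) 0 with h | h | h
    · have hs : Real.sign (x j) = -1 := Real.sign_of_neg h
      have habs : |x j| = -(x j) := abs_of_neg h
      have hpos : (0:ℝ) < |x j| := abs_pos.2 h.ne
      calc c j * x j = (Real.sign (x j) * x j) * |x j| ^ (p-1) := by rw [hc]; ring
        _ = |x j| * |x j| ^ (p - 1) := by rw [hs, habs]; ring_nf
        _ = |x j| ^ (1:ℝ) * |x j| ^ (p-1) := by rw [Real.rpow_one]
        _ = |x j| ^ p := by rw [← Real.rpow_add hpos]; ring_nf
    · simp [hc, h, Real.zero_rpow (ne_of_gt hp0)]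
    · have hs : Real.sign (x j) = 1 := Real.sign_of_pos h
      have habs : |x j| = x j := abs_of_pos h
      have hpos : (0:ℝ) < |x j| := abs_pos.2 h.ne'
      calc c j * x j = (Real.sign (x j) * x j) * |x j| ^ (p-1) := by rw [hc]; ring
        _ = |x j| * |x j| ^ (p - 1) := by rw [hs, habs]; ring
        _ = |x j| ^ (1:ℝ) * |x j| ^ (p-1) := by rw [Real.rpow_one]
        _ = |x j| ^ p := by rw [← Real.rpow_add hpos]; ring_nf
  have habs_sign : ∀ j, |Real.sign (x j)| ≤ 1 := by
    intro j
    rcases lt_trichotomy (x j) 0 with h | h | h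
    · rw [Real.sign_of_neg h]; norm_num
    · rw [h, Real.sign_zero]; norm_num
    · rw [Real.sign_of_pos h]; norm_num
  set wv : ↥H := ∑ j, c j • R j with hwv
  have hαw : α wv = A := by
    rw [hwv, map_sum, hA]
    refine Finset.sum_congr rfl fun j _ => ?_
    rw [ContinuousLinearMap.map_smul, smul_eq_mul]
    exact hcx j
  have hwv_coe : ∀ φ : G, ((wv : C(G, ℝ))) φ = ∑ j, c j * ((R j : C(G, ℝ))) φ := by
    intro φ
    rw [hwv]
    push_cast
    simp
  have hA_le_norm : A ≤ ‖wv‖ := by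
    calc A = α wv := hαw.symm
      _ ≤ |α wv| := le_abs_self _
      _ ≤ @norm _ (ContinuousLinearMap.hasOpNorm (𝕜 := ℝ) (𝕜₂ := ℝ) (σ₁₂ := RingHom.id ℝ) (E := H) (F := ℝ)) α * ‖wv‖ := by
        have h := ContinuousLinearMap.le_opNorm (𝕜 := ℝ) (𝕜₂ := ℝ) (σ₁₂ := RingHom.id ℝ) (E := H) (F := ℝ) α wv; rw [Real.norm_eq_abs] at h; exact h
      _ ≤ 1 * ‖wv‖ := mul_le_mul_of_nonneg_right hα (norm_nonneg _)
      _ = ‖wv‖ := one_mul _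
  have hnormwv : ‖wv‖ = ‖(wv : C(G, ℝ))‖ := rfl
  rcases eq_or_lt_of_le hp with hp1 | hp1
  · -- p = 1
    have hnorm : ‖(wv : C(G, ℝ))‖ ≤ M := by
      rw [ContinuousMap.norm_le _ hM]
      intro φ
      rw [Real.norm_eq_abs, hwv_coe φ]
      calc |∑ j, c j * ((R j : C(G, ℝ))) φ| ≤ ∑ j, |c j * ((R j : C(G, ℝ))) φ| :=
            Finset.abs_sum_le_sum_abs _ _
        _ ≤ ∑ j, |((R j : C(G, ℝ))) φ| := by
            refine Finset.sum_le_sum fun j _ => ?_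
            rw [abs_mul]
            have hcj : |c j| ≤ 1 := by
              rw [hc]
              simp only [← hp1, sub_self, Real.rpow_zero, mul_one]
              exact habs_sign j
            calc |c j| * |((R j : C(G, ℝ))) φ| ≤ 1 * |((R j : C(G, ℝ))) φ| :=
                  mul_le_mul_of_nonneg_right hcj (abs_nonneg _)
              _ = _ := one_mul _
        _ ≤ M := by simpa [← hp1, Real.rpow_one] using hRM φ
    calc ∑ j, |α (R j)| ^ p = A := rfl
      _ ≤ ‖wv‖ := hA_le_norm
      _ = ‖(wv : C(G, ℝ))‖ := hnormwv
      _ ≤ M := hnorm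
  · -- 1 < p
    have hq := Real.HolderConjugate.conjExponent hp1
    set q : ℝ := Real.conjExponent p with hqdef
    have hq0 : 0 < q := hq.symm.pos
    have hcq : ∀ j, |c j| ^ q = |x j| ^ p := by
      intro j
      by_cases h : x j = 0
      · simp [hc, h, Real.zero_rpow (ne_of_gt hq0), Real.zero_rpow (ne_of_gt hp0)]
      · have hsgn : |Real.sign (x j)| = 1 := by
          rcases lt_or_gt_of_ne h with h' | h'
          · rw [Real.sign_of_neg h']; norm_num
          · rw [Real.sign_of_pos h']; norm_num
        have habs : |c j| = |x j| ^ (p - 1) := by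
          rw [hc, abs_mul, hsgn, one_mul, abs_of_nonneg (Real.rpow_nonneg (abs_nonneg _) _)]
        rw [habs, ← Real.rpow_mul (abs_nonneg (x j)), hq.sub_one_mul_conj]
    have hsumcq : (∑ j, |c j| ^ q) = A := by
      rw [hA]; exact Finset.sum_congr rfl fun j _ => hcq j
    have hM' : 0 ≤ A ^ (1/q) * M ^ (1/p) :=
      mul_nonneg (Real.rpow_nonneg hA0 _) (Real.rpow_nonneg hM _)
    have hnorm : ‖(wv : C(G, ℝ))‖ ≤ A ^ (1/q) * M ^ (1/p) := by
      rw [ContinuousMap.norm_le _ hM']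
      intro φ
      rw [Real.norm_eq_abs, hwv_coe φ]
      have h1 : |∑ j, c j * ((R j : C(G, ℝ))) φ| ≤ ∑ j, |c j| * |((R j : C(G, ℝ))) φ| := by
        refine (Finset.abs_sum_le_sum_abs _ _).trans (le_of_eq ?_)
        exact Finset.sum_congr rfl fun j _ => abs_mul _ _
      have h2 : ∑ j, |c j| * |((R j : C(G, ℝ))) φ|
          ≤ (∑ j, abs (abs (c j)) ^ q) ^ (1/q) * (∑ j, abs (abs (((R j : C(G, ℝ))) φ)) ^ p) ^ (1/p) :=
        Real.inner_le_Lp_mul_Lq Finset.univ (fun j => |c j|) (fun j => |((R j : C(G, ℝ))) φ|) hq.symm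
      simp only [abs_abs] at h2
      have h3 : (∑ j, |c j| ^ q) ^ (1/q) = A ^ (1/q) := by rw [hsumcq]
      have h4 : (∑ j, |((R j : C(G, ℝ))) φ| ^ p) ^ (1/p) ≤ M ^ (1/p) :=
        Real.rpow_le_rpow (Finset.sum_nonneg fun j _ => Real.rpow_nonneg (abs_nonneg _) _)
          (hRM φ) (by positivity)
      calc |∑ j, c j * ((R j : C(G, ℝ))) φ| ≤ _ := h1
        _ ≤ _ := h2
        _ ≤ A ^ (1/q) * M ^ (1/p) := by
            rw [h3]
            exact mul_le_mul_of_nonneg_left h4 (Real.rpow_nonneg hA0 _)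
    have hkey : A ≤ A ^ (1/q) * M ^ (1/p) := by
      calc A ≤ ‖wv‖ := hA_le_norm
        _ = ‖(wv : C(G, ℝ))‖ := hnormwv
        _ ≤ _ := hnorm
    have hAsplit : A = A ^ (1/q) * A ^ (1/p) := by
      rw [← Real.rpow_add hApos]
      rw [show 1/q + 1/p = 1 by
        have := hq.symm.inv_add_inv_eq_inv; rw [inv_one] at this
        rw [one_div, one_div]; linarith]
      exact (Real.rpow_one A).symm
    have hcancel : A ^ (1/p) ≤ M ^ (1/p) := by
      have hAq : (0:ℝ) < A ^ (1/q) := Real.rpow_pos_of_pos hApos _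
      have h5 := hkey
      nth_rewrite 1 [hAsplit] at h5
      exact le_of_mul_le_mul_left h5 hAq
    have : (A ^ (1/p)) ^ p ≤ (M ^ (1/p)) ^ p :=
      Real.rpow_le_rpow (Real.rpow_nonneg hA0 _) hcancel hp0.le
    rwa [← Real.rpow_mul hA0, ← Real.rpow_mul hM, one_div_mul_cancel (ne_of_gt hp0),
      Real.rpow_one, Real.rpow_one] at this

end AuxPietsch

/-- Let `G` be a compact Hausdorff topological group, `H` a closed translation
invariant subspace of `C(G)`, `Y` a metric space, `1 ≤ p < ∞` and `u : H → Y` a translation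
invariant Lipschitz `p`-`B_{H*}`-summing map. Then the normalized Haar measure `σ` on `G` is a
Pietsch measure for `u`. -/
theorem haar_is_pietsch_measure_lipschitz
    {G Y : Type*} [Group G] [TopologicalSpace G] [IsTopologicalGroup G]
    [CompactSpace G] [T2Space G] [MeasurableSpace G] [BorelSpace G] [MetricSpace Y]
    (σ : Measure G) [IsProbabilityMeasure σ] [σ.IsMulLeftInvariant] [σ.Regular]
    (H : Subspace ℝ C(G, ℝ)) (hHclosed : IsClosed (H : Set C(G, ℝ)))
    -- `H` is translation invariant
    (hHinv : ∀ (ψ : G) (T : C(G, ℝ)), T ∈ H →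
      T.comp (Homeomorph.mulLeft ψ : C(G, G)) ∈ H)
    (p : ℝ) (hp : 1 ≤ p) (u : H → Y) (L : NNReal) (hu : LipschitzWith L u)
    -- `u` is translation invariant
    (huinv : ∀ (ψ : G) (T : H),
      u ⟨(T : C(G, ℝ)).comp (Homeomorph.mulLeft ψ : C(G, G)), hHinv ψ T T.2⟩ = u T)
    -- `u` is Lipschitz `p`-`B_{H*}`-summing
    (husum : ∃ C > (0 : ℝ), ∀ n : ℕ, ∀ T S : Fin n → H,
      (∑ j, dist (u (T j)) (u (S j)) ^ p) ^ (1 / p) ≤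
        C * ⨆ α : {α : H →L[ℝ] ℝ // @norm _ (ContinuousLinearMap.hasOpNorm (𝕜 := ℝ) (𝕜₂ := ℝ) (σ₁₂ := RingHom.id ℝ) (E := H) (F := ℝ)) α ≤ 1},
          (∑ j, |α.1 (T j - S j)| ^ p) ^ (1 / p)) :
    ∀ T S : H, dist (u T) (u S) ≤
      sInf {C : ℝ | 0 < C ∧ ∀ n : ℕ, ∀ T S : Fin n → H,
          (∑ j, dist (u (T j)) (u (S j)) ^ p) ^ (1 / p) ≤
            C * ⨆ α : {α : H →L[ℝ] ℝ // @norm _ (ContinuousLinearMap.hasOpNorm (𝕜 := ℝ) (𝕜₂ := ℝ) (σ₁₂ := RingHom.id ℝ) (E := H) (F := ℝ)) α ≤ 1},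
              (∑ j, |α.1 (T j - S j)| ^ p) ^ (1 / p)} *
        (∫ φ, |(T : C(G, ℝ)) φ - (S : C(G, ℝ)) φ| ^ p ∂σ) ^ (1 / p) := by
  classical
  intro T S
  have hp0 : (0:ℝ) < p := lt_of_lt_of_le zero_lt_one hp
  set g : C(G, ℝ) := ⟨fun φ => |(T : C(G, ℝ)) φ - (S : C(G, ℝ)) φ| ^ p, by
    refine Continuous.rpow_const ?_ fun x => Or.inr hp0.le
    exact ((map_continuous (T : C(G, ℝ))).sub (map_continuous (S : C(G, ℝ)))).abs⟩ with hg
  have hg0 : ∀ x, 0 ≤ g x := fun x => Real.rpow_nonneg (abs_nonneg _) p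
  set I : ℝ := ∫ x, g x ∂σ with hIdef
  have hI0 : 0 ≤ I := integral_nonneg hg0
  have hIeq : (∫ φ, |(T : C(G, ℝ)) φ - (S : C(G, ℝ)) φ| ^ p ∂σ) = I := rfl
  set d : ℝ := dist (u T) (u S) with hd
  have hd0 : 0 ≤ d := dist_nonneg
  set K : Set ℝ := {C : ℝ | 0 < C ∧ ∀ n : ℕ, ∀ T S : Fin n → H,
      (∑ j, dist (u (T j)) (u (S j)) ^ p) ^ (1 / p) ≤
        C * ⨆ α : {α : H →L[ℝ] ℝ // @norm _ (ContinuousLinearMap.hasOpNorm (𝕜 := ℝ) (𝕜₂ := ℝ) (σ₁₂ := RingHom.id ℝ) (E := H) (F := ℝ)) α ≤ 1},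
          (∑ j, |α.1 (T j - S j)| ^ p) ^ (1 / p)} with hK
  obtain ⟨C₀, hC₀pos, hC₀⟩ := husum
  have hKne : K.Nonempty := ⟨C₀, hC₀pos, hC₀⟩
  have key : ∀ C ∈ K, d ≤ C * I ^ (1/p) := by
    rintro C ⟨hCpos, hC⟩
    have hmain : ∀ ε : ℝ, 0 < ε → d ^ p ≤ C ^ p * (I + ε) := by
      intro ε hε
      obtain ⟨n, hn, ψ, hψ⟩ := aux_discrete σ g hg0 hε
      have hnpos' : (0:ℝ) < (n : ℝ) := by exact_mod_cast hn
      have hIε : (0:ℝ) ≤ I + ε := by linarith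
      set Tf : Fin n → H := fun j =>
        ⟨(T : C(G, ℝ)).comp (Homeomorph.mulLeft (ψ j) : C(G, G)), hHinv (ψ j) T T.2⟩ with hTf
      set Sf : Fin n → H := fun j =>
        ⟨(S : C(G, ℝ)).comp (Homeomorph.mulLeft (ψ j) : C(G, G)), hHinv (ψ j) S S.2⟩ with hSf
      have huT : ∀ j, u (Tf j) = u T := fun j => huinv (ψ j) T
      have huS : ∀ j, u (Sf j) = u S := fun j => huinv (ψ j) S
      have hLHS : (∑ j, dist (u (Tf j)) (u (Sf j)) ^ p) = (n : ℝ) * d ^ p := by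
        calc (∑ j, dist (u (Tf j)) (u (Sf j)) ^ p) = ∑ _j : Fin n, d ^ p := by
              refine Finset.sum_congr rfl fun j _ => ?_
              rw [huT j, huS j]
          _ = (n : ℝ) * d ^ p := by simp [Finset.sum_const, nsmul_eq_mul]
      have hSup : (⨆ α : {α : H →L[ℝ] ℝ // @norm _ (ContinuousLinearMap.hasOpNorm (𝕜 := ℝ) (𝕜₂ := ℝ) (σ₁₂ := RingHom.id ℝ) (E := H) (F := ℝ)) α ≤ 1},
          (∑ j, |α.1 (Tf j - Sf j)| ^ p) ^ (1 / p)) ≤ ((n : ℝ) * (I + ε)) ^ (1/p) := by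
        have hne : Nonempty {α : H →L[ℝ] ℝ // @norm _ (ContinuousLinearMap.hasOpNorm (𝕜 := ℝ) (𝕜₂ := ℝ) (σ₁₂ := RingHom.id ℝ) (E := H) (F := ℝ)) α ≤ 1} :=
          ⟨⟨0, by simp⟩⟩
        refine ciSup_le fun α => ?_
        refine Real.rpow_le_rpow
          (Finset.sum_nonneg fun j _ => Real.rpow_nonneg (abs_nonneg _) _) ?_ (by positivity)
        refine aux_dual α.1 α.2 hp (fun j => Tf j - Sf j)
          (mul_nonneg (Nat.cast_nonneg n) hIε) ?_
        intro φ
        have hcoe : ∀ j : Fin n, (((Tf j - Sf j : H) : C(G, ℝ))) φ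
            = (T : C(G, ℝ)) (ψ j * φ) - (S : C(G, ℝ)) (ψ j * φ) := by
          intro j
          simp [hTf, hSf, ContinuousMap.comp_apply]
        calc ∑ j, |(((Tf j - Sf j : H) : C(G, ℝ))) φ| ^ p = ∑ j, g (ψ j * φ) := by
              refine Finset.sum_congr rfl fun j _ => ?_
              rw [hcoe j]
              rfl
          _ ≤ (n : ℝ) * (I + ε) := hψ φ
      have happ := hC n Tf Sf
      rw [hLHS] at happ
      have hfinal : ((n : ℝ) * d ^ p) ^ (1/p) ≤ C * ((n : ℝ) * (I + ε)) ^ (1/p) :=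
        happ.trans (mul_le_mul_of_nonneg_left hSup hCpos.le)
      have hnd0 : (0:ℝ) ≤ (n : ℝ) * d ^ p :=
        mul_nonneg (Nat.cast_nonneg n) (Real.rpow_nonneg hd0 _)
      have h2 := Real.rpow_le_rpow (Real.rpow_nonneg hnd0 _) hfinal hp0.le
      rw [← Real.rpow_mul hnd0, one_div_mul_cancel hp0.ne', Real.rpow_one] at h2
      rw [Real.mul_rpow hCpos.le (Real.rpow_nonneg (mul_nonneg (Nat.cast_nonneg n) hIε) _)] at h2
      rw [← Real.rpow_mul (mul_nonneg (Nat.cast_nonneg n) hIε),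
        one_div_mul_cancel hp0.ne', Real.rpow_one] at h2
      -- h2 : n * d^p ≤ C^p * (n * (I+ε))
      have h3 : (n:ℝ) * (d ^ p) ≤ (n:ℝ) * (C ^ p * (I + ε)) := by nlinarith [h2]
      exact le_of_mul_le_mul_left h3 hnpos'
    have hdp : d ^ p ≤ C ^ p * I := by
      refine le_of_forall_pos_le_add fun δ hδ => ?_
      have hCp : (0:ℝ) < C ^ p := Real.rpow_pos_of_pos hCpos _
      have := hmain (δ / C ^ p) (div_pos hδ hCp)
      calc d ^ p ≤ C ^ p * (I + δ / C ^ p) := this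
        _ = C ^ p * I + δ := by field_simp
    have h4 := Real.rpow_le_rpow (Real.rpow_nonneg hd0 _) hdp (by positivity : (0:ℝ) ≤ 1/p)
    rw [← Real.rpow_mul hd0, mul_one_div_cancel hp0.ne', Real.rpow_one] at h4
    rw [Real.mul_rpow (Real.rpow_nonneg hCpos.le _) hI0] at h4
    rwa [← Real.rpow_mul hCpos.le, mul_one_div_cancel hp0.ne', Real.rpow_one] at h4
  rw [hIeq]
  rcases eq_or_lt_of_le hI0 with hI0' | hIpos
  · have h0 := key C₀ ⟨hC₀pos, hC₀⟩
    rw [← hI0', Real.zero_rpow (by positivity : (1:ℝ)/p ≠ 0), mul_zero] at h0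
    rw [← hI0', Real.zero_rpow (by positivity : (1:ℝ)/p ≠ 0), mul_zero]
    exact h0
  · have hIp : (0:ℝ) < I ^ (1/p) := Real.rpow_pos_of_pos hIpos _
    have hlb : ∀ C ∈ K, d / I ^ (1/p) ≤ C := fun C hC =>
      (div_le_iff₀ hIp).2 (key C hC)
    have hinf := le_csInf hKne hlb
    exact (div_le_iff₀ hIp).1 hinf
end

section
/- Let m ∈ ℕ, G₁,…,Gₘ be compact Hausdorff topological groups, Hᵢ a closed translation invariant linear subspace of C(Gᵢ) for each i ∈ {1,…,m}, F a Banach space, Φ : [0,∞) → [0,∞) a normalized Orlicz function, and u : H₁ × ⋯ × Hₘ → F a translation m-invariant Φ-summing continuous m-linear operator. Then the normalized Haar measure σ_G on G = G₁ × ⋯ × Gₘ is a Pietsch measure for u: ‖u(T₁,…,Tₘ)‖_F ≤ π_Φ(u) · ‖⊙(T₁,…,Tₘ)‖_{L_Φ(σ_G)} for all (T₁,…,Tₘ) ∈ H₁ × ⋯ × Hₘ, where ⊙(T₁,…,Tₘ)(φ₁,…,φₘ) = T₁(φ₁)⋯Tₘ(φₘ) and ‖g‖_{L_Φ(σ_G)}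 = inf{ε > 0 : ∫_G Φ(|g(φ)|/ε) dσ_G(φ) ≤ 1} is the Luxemburg norm. -/
open MeasureTheory

/-- The `n`-dimensional Orlicz sequence norm `‖x‖_{ℓ_Φ^n(w)}` with weights `w`. -/
noncomputable def orliczSeqNorm (Φ : ℝ → ℝ) {n : ℕ} (w : Fin n → ℝ) (x : Fin n → ℝ) : ℝ :=
  sInf {ε : ℝ | 0 < ε ∧ ∑ j, Φ (|x j| / ε) * w j ≤ 1}

/-- The Luxemburg norm `‖g‖_{L_Φ(σ)}` of a function `g` with respect to a measure `σ`. -/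
noncomputable def luxemburgNorm {G : Type*} [MeasurableSpace G] (Φ : ℝ → ℝ) (σ : Measure G)
    (g : G → ℝ) : ℝ :=
  sInf {ε : ℝ | 0 < ε ∧ ∫ φ, Φ (|g φ| / ε) ∂σ ≤ 1}

open Set

section PhiLemmas
variable {Φ : ℝ → ℝ}

lemma phi_nonneg (hmono : MonotoneOn Φ (Set.Ici 0)) (h0 : Φ 0 = 0) {s : ℝ} (hs : 0 ≤ s) :
    0 ≤ Φ s :=
  h0 ▸ hmono (by simp) hs hs

lemma phi_le_one (hmono : MonotoneOn Φ (Set.Ici 0)) (h1 : Φ 1 = 1) {s : ℝ}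
    (hs0 : 0 ≤ s) (hs1 : s ≤ 1) : Φ s ≤ 1 :=
  h1 ▸ hmono hs0 (by simp) hs1

lemma phi_ge_self (hconv : ConvexOn ℝ (Set.Ici 0) Φ) (h0 : Φ 0 = 0) (h1 : Φ 1 = 1)
    {s : ℝ} (hs : 1 ≤ s) : s ≤ Φ s := by
  have hs0 : 0 < s := lt_of_lt_of_le one_pos hs
  have h := hconv.2 (mem_Ici.mpr hs0.le) (mem_Ici.mpr (le_refl (0:ℝ)))
    (show (0:ℝ) ≤ 1/s by positivity)
    (show (0:ℝ) ≤ 1 - 1/s by rw [sub_nonneg]; exact div_le_one_of_le₀ hs hs0.le)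
    (show 1/s + (1 - 1/s) = 1 by ring)
  have hxy : (1/s) • s + (1 - 1/s) • (0:ℝ) = 1 := by
    rw [smul_eq_mul, smul_eq_mul, mul_zero, add_zero, one_div, inv_mul_cancel₀ hs0.ne']
  rw [hxy, h1, h0, smul_eq_mul, smul_eq_mul, mul_zero, add_zero, one_div, inv_mul_eq_div,
    le_div_iff₀ hs0, one_mul] at h
  exact h

lemma phi_scale (hconv : ConvexOn ℝ (Set.Ici 0) Φ) (h0 : Φ 0 = 0)
    {l s : ℝ} (hl0 : 0 ≤ l) (hl1 : l ≤ 1) (hs : 0 ≤ s) : Φ (l * s) ≤ l * Φ s := by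
  have h := hconv.2 (mem_Ici.mpr hs) (mem_Ici.mpr (le_refl (0:ℝ)))
    hl0 (show (0:ℝ) ≤ 1 - l by linarith) (show l + (1 - l) = 1 by ring)
  simpa [h0] using h

lemma phi_conv_pt (hconv : ConvexOn ℝ (Set.Ici 0) Φ) (hmono : MonotoneOn Φ (Set.Ici 0))
    {ε : ℝ} (hε : 0 < ε) {x y a b : ℝ} (ha : 0 ≤ a) (hb : 0 ≤ b) (hab : a + b = 1) :
    Φ (|a * x + b * y| / ε) ≤ a * Φ (|x| / ε) + b * Φ (|y| / ε) := by
  have h1 : |a * x + b * y| / ε ≤ a * (|x| / ε) + b * (|y| / ε) := by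
    rw [div_le_iff₀ hε]
    calc |a * x + b * y| ≤ |a * x| + |b * y| := abs_add_le _ _
      _ = a * |x| + b * |y| := by rw [abs_mul, abs_mul, abs_of_nonneg ha, abs_of_nonneg hb]
      _ = (a * (|x| / ε) + b * (|y| / ε)) * ε := by
          field_simp
  have h2 : Φ (|a * x + b * y| / ε) ≤ Φ (a * (|x| / ε) + b * (|y| / ε)) :=
    hmono (mem_Ici.mpr (by positivity)) (mem_Ici.mpr (by positivity)) h1
  have h3 := hconv.2 (mem_Ici.mpr (by positivity : (0:ℝ) ≤ |x| / ε))
    (mem_Ici.mpr (by positivity : (0:ℝ) ≤ |y| / ε)) ha hb hab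
  simpa using h2.trans h3

end PhiLemmas

section OrliczLemmas
variable {Φ : ℝ → ℝ}

lemma orliczSeqNorm_nonneg {n : ℕ} (Φ : ℝ → ℝ) (w x : Fin n → ℝ) :
    0 ≤ orliczSeqNorm Φ w x :=
  Real.sInf_nonneg (fun _ hy => hy.1.le)

lemma orliczSeqNorm_le {n : ℕ} {w x : Fin n → ℝ} {ε : ℝ} (hε : 0 < ε)
    (h : ∑ j, Φ (|x j| / ε) * w j ≤ 1) : orliczSeqNorm Φ w x ≤ ε :=
  csInf_le ⟨0, fun _ hy => hy.1.le⟩ ⟨hε, h⟩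

lemma le_orliczSeqNorm_const (hconv : ConvexOn ℝ (Set.Ici 0) Φ)
    (hmono : MonotoneOn Φ (Set.Ici 0)) (h0 : Φ 0 = 0) (h1 : Φ 1 = 1)
    {n : ℕ} {w : Fin n → ℝ} (hw : ∑ j, w j = 1) {t : ℝ} (ht : 0 ≤ t) :
    t ≤ orliczSeqNorm Φ w (fun _ => t) := by
  have hsum : ∀ ε : ℝ, ∑ j, Φ (|t| / ε) * w j = Φ (|t| / ε) := by
    intro ε; rw [← Finset.mul_sum, hw, mul_one]
  apply le_csInf
  · refine ⟨max t 1, lt_of_lt_of_le one_pos (le_max_right _ _), ?_⟩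
    rw [hsum]
    exact phi_le_one hmono h1 (by positivity)
      (div_le_one_of_le₀ (by rw [abs_of_nonneg ht]; exact le_max_left _ _)
        (le_trans zero_le_one (le_max_right _ _)))
  · rintro ε ⟨hε, hle⟩
    rw [hsum] at hle
    by_contra hlt
    push_neg at hlt
    have h2 : 1 < |t| / ε := by
      rw [lt_div_iff₀ hε, one_mul, abs_of_nonneg ht]; exact hlt
    have := phi_ge_self hconv h0 h1 h2.le
    linarith

end OrliczLemmas

section LemA
variable {m : ℕ} {G : Fin m → Type*} [∀ i, TopologicalSpace (G i)]
  [∀ i, CompactSpace (G i)] [∀ i, Nonempty (G i)]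

lemma multilinear_eval_le (H : ∀ i, Subspace ℝ C(G i, ℝ)) {n : ℕ}
    (S : Fin n → ∀ i, H i) (lam : Fin n → ℝ)
    (α : ∀ i, {a : StrongDual ℝ (H i) // @norm _ (@ContinuousLinearMap.hasOpNorm ℝ ℝ (H i) ℝ (Submodule.seminormedAddCommGroup (H i)) _ _ _ (Submodule.normedSpace (H i)) _ _) a ≤ 1}) :
    |∑ j, lam j * ∏ i, (α i).1 (S j i)| ≤
      ⨆ a : ∀ i, G i, |∑ j, lam j * ∏ i, ((S j i : C(G i, ℝ)) (a i))| := by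
  classical
  set R := ⨆ a : ∀ i, G i, |∑ j, lam j * ∏ i, ((S j i : C(G i, ℝ)) (a i))| with hR
  have hbdd : BddAbove (Set.range fun a : ∀ i, G i =>
      |∑ j, lam j * ∏ i, ((S j i : C(G i, ℝ)) (a i))|) := by
    refine ⟨∑ j, |lam j| * ∏ i, ‖(S j i : C(G i, ℝ))‖, ?_⟩
    rintro y ⟨a, rfl⟩
    calc |∑ j, lam j * ∏ i, ((S j i : C(G i, ℝ)) (a i))|
        ≤ ∑ j, |lam j * ∏ i, ((S j i : C(G i, ℝ)) (a i))| := Finset.abs_sum_le_sum_abs _ _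
      _ ≤ ∑ j, |lam j| * ∏ i, ‖(S j i : C(G i, ℝ))‖ := by
          refine Finset.sum_le_sum fun j _ => ?_
          rw [abs_mul]
          refine mul_le_mul_of_nonneg_left ?_ (abs_nonneg _)
          rw [Finset.abs_prod]
          refine Finset.prod_le_prod (fun i _ => abs_nonneg _) fun i _ => ?_
          simpa [Real.norm_eq_abs] using ((S j i : C(G i, ℝ)).norm_coe_le_norm (a i))
  have hR0 : 0 ≤ R := le_trans (abs_nonneg _) (le_ciSup hbdd (Classical.arbitrary _))
  have key : ∀ s : Finset (Fin m), ∀ a : ∀ i, G i,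
      |∑ j, lam j * ((∏ i ∈ s, (α i).1 (S j i)) *
        ∏ i ∈ sᶜ, (S j i : C(G i, ℝ)) (a i))| ≤ R := by
    intro s
    induction s using Finset.induction_on with
    | empty =>
      intro a
      have he : ∀ j, lam j * ((∏ i ∈ (∅ : Finset (Fin m)), (α i).1 (S j i)) *
          ∏ i ∈ (∅ : Finset (Fin m))ᶜ, (S j i : C(G i, ℝ)) (a i))
          = lam j * ∏ i, (S j i : C(G i, ℝ)) (a i) := by
        intro j
        rw [Finset.prod_empty, one_mul, Finset.compl_empty]
      simp_rw [he]
      exact le_ciSup hbdd a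
    | @insert k s hk ih =>
      intro a
      set c : Fin n → ℝ := fun j => lam j * ((∏ i ∈ s, (α i).1 (S j i)) *
        ∏ i ∈ (insert k s)ᶜ, (S j i : C(G i, ℝ)) (a i)) with hc
      set Sk : H k := ∑ j, c j • S j k with hSk
      have heq : ∑ j, lam j * ((∏ i ∈ insert k s, (α i).1 (S j i)) *
          ∏ i ∈ (insert k s)ᶜ, (S j i : C(G i, ℝ)) (a i)) = (α k).1 Sk := by
        rw [hSk, map_sum]
        refine Finset.sum_congr rfl fun j _ => ?_
        rw [_root_.map_smul, smul_eq_mul, Finset.prod_insert hk]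
        simp only [hc]
        ring
      rw [heq]
      have h1 : |(α k).1 Sk| ≤ ‖Sk‖ := by
        have := @ContinuousLinearMap.le_opNorm ℝ ℝ (H k) ℝ (Submodule.seminormedAddCommGroup (H k)) _ _ _
            (Submodule.normedSpace (H k)) _ _ _ (α k).1 Sk
        rw [Real.norm_eq_abs] at this
        calc |(α k).1 Sk| ≤ _ * ‖Sk‖ := this
          _ ≤ 1 * ‖Sk‖ := mul_le_mul_of_nonneg_right (α k).2 (norm_nonneg _)
          _ = ‖Sk‖ := one_mul _
      refine h1.trans ?_
      have hcoe : ‖Sk‖ = ‖(Sk : C(G k, ℝ))‖ := rfl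
      rw [hcoe, ContinuousMap.norm_le _ hR0]
      intro ck
      have hev : (Sk : C(G k, ℝ)) ck = ∑ j, c j * (S j k : C(G k, ℝ)) ck := by
        rw [hSk]
        have : ((∑ j, c j • S j k : H k) : C(G k, ℝ)) = ∑ j, c j • (S j k : C(G k, ℝ)) := by
          push_cast
          rfl
        rw [this, ContinuousMap.coe_sum, Finset.sum_apply]
        simp [smul_eq_mul]
      rw [Real.norm_eq_abs, hev]
      have hih := ih (Function.update a k ck)
      refine le_trans (le_of_eq ?_) hih
      congr 1
      refine Finset.sum_congr rfl fun j _ => ?_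
      have hks : k ∈ sᶜ := Finset.mem_compl.mpr hk
      rw [← Finset.mul_prod_erase _ _ hks, ← Finset.compl_insert]
      have hupd : ∀ i ∈ (insert k s)ᶜ, (S j i : C(G i, ℝ)) ((Function.update a k ck) i)
          = (S j i : C(G i, ℝ)) (a i) := by
        intro i hi
        have : i ≠ k := by
          intro hik; subst hik; exact (Finset.mem_compl.mp hi) (Finset.mem_insert_self _ _)
        rw [Function.update_of_ne this]
      rw [Finset.prod_congr rfl hupd, Function.update_self]
      simp only [hc]
      ring
  have hfin := key Finset.univ (Classical.arbitrary _)
  have he : ∀ j, lam j * ((∏ i ∈ Finset.univ, (α i).1 (S j i)) *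
      ∏ i ∈ (Finset.univ : Finset (Fin m))ᶜ, (S j i : C(G i, ℝ))
        ((Classical.arbitrary (∀ i, G i)) i)) = lam j * ∏ i, (α i).1 (S j i) := by
    intro j
    rw [Finset.compl_univ, Finset.prod_empty, mul_one]
  rwa [Finset.sum_congr rfl fun j _ => he j] at hfin
end LemA

section LemB
variable {m : ℕ} {G : Fin m → Type*} [∀ i, TopologicalSpace (G i)]
  [∀ i, CompactSpace (G i)] [∀ i, Nonempty (G i)]

lemma sum_phi_dual_le {Φ : ℝ → ℝ} (hconv : ConvexOn ℝ (Set.Ici 0) Φ)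
    (hmono : MonotoneOn Φ (Set.Ici 0)) (hcont : ContinuousOn Φ (Set.Ici 0))
    (H : ∀ i, Subspace ℝ C(G i, ℝ)) {n : ℕ} (S : Fin n → ∀ i, H i)
    {w : Fin n → ℝ} (hw : ∀ j, 0 ≤ w j) {ε : ℝ} (hε : 0 < ε)
    (hpt : ∀ a : ∀ i, G i, ∑ j, Φ (|∏ i, (S j i : C(G i, ℝ)) (a i)| / ε) * w j ≤ 1)
    (α : ∀ i, {a : StrongDual ℝ (H i) // @norm _ (@ContinuousLinearMap.hasOpNorm ℝ ℝ (H i) ℝ (Submodule.seminormedAddCommGroup (H i)) _ _ _ (Submodule.normedSpace (H i)) _ _) a ≤ 1}) :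
    ∑ j, Φ (|∏ i, (α i).1 (S j i)| / ε) * w j ≤ 1 := by
  classical
  set N : (Fin n → ℝ) → ℝ := fun z => ∑ j, Φ (|z j| / ε) * w j with hN
  set D : Set (Fin n → ℝ) := {z | N z ≤ 1} with hD
  have hDconv : Convex ℝ D := by
    intro z1 hz1 z2 hz2 a b ha hb hab
    have hkey : N (a • z1 + b • z2) ≤ a * N z1 + b * N z2 := by
      rw [hN]
      simp only
      rw [Finset.mul_sum, Finset.mul_sum, ← Finset.sum_add_distrib]
      refine Finset.sum_le_sum fun j _ => ?_
      have hcp := phi_conv_pt hconv hmono hε (x := z1 j) (y := z2 j) ha hb hab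
      have hj : (a • z1 + b • z2) j = a * z1 j + b * z2 j := rfl
      rw [hj]
      calc Φ (|a * z1 j + b * z2 j| / ε) * w j
          ≤ (a * Φ (|z1 j| / ε) + b * Φ (|z2 j| / ε)) * w j :=
            mul_le_mul_of_nonneg_right hcp (hw j)
        _ = a * (Φ (|z1 j| / ε) * w j) + b * (Φ (|z2 j| / ε) * w j) := by ring
    have : a * N z1 + b * N z2 ≤ 1 := by
      calc a * N z1 + b * N z2 ≤ a * 1 + b * 1 := by
            exact add_le_add (mul_le_mul_of_nonneg_left hz1 ha)
              (mul_le_mul_of_nonneg_left hz2 hb)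
        _ = 1 := by rw [mul_one, mul_one, hab]
    exact le_trans hkey this
  have hNcont : Continuous N := by
    refine continuous_finset_sum _ fun j _ => ?_
    refine Continuous.mul ?_ continuous_const
    have h1 : Continuous fun z : Fin n → ℝ => |z j| / ε :=
      by fun_prop
    exact hcont.comp_continuous h1 (fun z => Set.mem_Ici.mpr (by positivity))
  have hDclosed : IsClosed D := isClosed_le hNcont continuous_const
  by_contra hy
  set y : Fin n → ℝ := fun j => ∏ i, (α i).1 (S j i) with hyv
  have hyD : y ∉ D := hy
  obtain ⟨f, u, hfD, hfy⟩ := geometric_hahn_banach_closed_point hDconv hDclosed hyD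
  set lam : Fin n → ℝ := fun j => f (Pi.single j 1) with hlam
  have hfz : ∀ z : Fin n → ℝ, f z = ∑ j, lam j * z j := by
    intro z
    conv_lhs => rw [show z = ∑ j, (Pi.single j (z j) : Fin n → ℝ) from (Finset.univ_sum_single z).symm]
    rw [map_sum]
    refine Finset.sum_congr rfl fun j _ => ?_
    have hz : (Pi.single j (z j) : Fin n → ℝ) = z j • (Pi.single j (1 : ℝ) : Fin n → ℝ) := by
      rw [← Pi.single_smul, smul_eq_mul, mul_one]
    rw [hz, _root_.map_smul, smul_eq_mul, mul_comm]
  have hvmem : ∀ a : ∀ i, G i, (fun j => ∏ i, (S j i : C(G i, ℝ)) (a i)) ∈ D :=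
    fun a => hpt a
  have hBu : ∀ a : ∀ i, G i, |∑ j, lam j * ∏ i, (S j i : C(G i, ℝ)) (a i)| ≤ u := by
    intro a
    have h1 := hfD _ (hvmem a)
    have hneg : (-(fun j => ∏ i, (S j i : C(G i, ℝ)) (a i)) : Fin n → ℝ) ∈ D := by
      show N _ ≤ 1
      have : N (-(fun j => ∏ i, (S j i : C(G i, ℝ)) (a i)))
          = N (fun j => ∏ i, (S j i : C(G i, ℝ)) (a i)) := by
        rw [hN]; simp only
        refine Finset.sum_congr rfl fun j _ => ?_
        rw [show (-(fun j => ∏ i, (S j i : C(G i, ℝ)) (a i)) : Fin n → ℝ) j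
            = -(∏ i, (S j i : C(G i, ℝ)) (a i)) from rfl, abs_neg]
      rw [this]
      exact hvmem a
    have h2 := hfD _ hneg
    rw [map_neg] at h2
    rw [hfz] at h1 h2
    rw [abs_le]
    constructor <;> linarith
  have hA := multilinear_eval_le H S lam α
  have hsup : (⨆ a : ∀ i, G i, |∑ j, lam j * ∏ i, ((S j i : C(G i, ℝ)) (a i))|) ≤ u :=
    ciSup_le hBu
  have : f y ≤ u := by
    rw [hfz]
    calc ∑ j, lam j * y j ≤ |∑ j, lam j * y j| := le_abs_self _
      _ ≤ u := le_trans hA hsup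
  linarith
end LemB

section RightInv
open MeasureTheory.Measure

lemma rightInvariant_of_leftInvariant {K : Type*} [Group K] [TopologicalSpace K]
    [IsTopologicalGroup K] [CompactSpace K] [T2Space K] [MeasurableSpace K] [BorelSpace K]
    (σ : Measure K) [IsProbabilityMeasure σ] [σ.IsMulLeftInvariant] [σ.Regular] :
    σ.IsMulRightInvariant := by
  constructor
  intro a
  set ν := Measure.map (· * a) σ with hν
  haveI : IsProbabilityMeasure ν :=
    Measure.isProbabilityMeasure_map (measurable_mul_const a).aemeasurable
  haveI : ν.IsMulLeftInvariant := by
    constructor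
    intro g
    rw [hν, Measure.map_map (measurable_const_mul g) (measurable_mul_const a),
      show ((g * ·) ∘ (· * a)) = ((· * a) ∘ (g * ·)) from funext fun x => (mul_assoc g x a).symm,
      ← Measure.map_map (measurable_mul_const a) (measurable_const_mul g),
      map_mul_left_eq_self]
  haveI : ν.Regular := by
    have : ν = Measure.map (Homeomorph.mulRight a) σ := rfl
    rw [this]
    exact Measure.Regular.map (Homeomorph.mulRight a)
  haveI : σ.IsHaarMeasure := {}
  haveI : ν.IsHaarMeasure := {}
  exact isHaarMeasure_eq_of_isProbabilityMeasure ν σ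
end RightInv

section LemC

lemma cont_integrable {K : Type*} [TopologicalSpace K] [CompactSpace K] [T2Space K]
    [MeasurableSpace K] [BorelSpace K] (σ : MeasureTheory.Measure K)
    [MeasureTheory.IsFiniteMeasure σ] {f : K → ℝ} (hf : Continuous f) :
    MeasureTheory.Integrable f σ := by
  have := hf.continuousOn.integrableOn_compact (μ := σ) isCompact_univ
  rwa [MeasureTheory.integrableOn_univ] at this

lemma riemann_partition {K : Type*} [Group K] [TopologicalSpace K] [IsTopologicalGroup K]
    [CompactSpace K] [T2Space K] [MeasurableSpace K] [BorelSpace K]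
    (σ : Measure K) [IsProbabilityMeasure σ] [σ.IsMulRightInvariant]
    {k : K → ℝ} (hk : Continuous k) (hk0 : ∀ z, 0 ≤ k z) {c δ : ℝ} (hδ : 0 < δ)
    (hint : ∫ z, k z ∂σ ≤ c) :
    ∃ (n : ℕ) (w : Fin n → ℝ) (φ : Fin n → K), (∀ j, 0 < w j) ∧ (∑ j, w j = 1) ∧
      ∀ a : K, ∑ j, k (φ j * a) * w j ≤ c + δ := by
  classical
  obtain ⟨V, W, hVopen, _, h1V, hWuniv, hVW⟩ :=
    generalized_tube_lemma isCompact_singleton isCompact_univ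
      (show IsOpen {p : K × K | |k (p.1 * p.2) - k p.2| < δ} from
        isOpen_lt (continuous_abs.comp
          ((hk.comp continuous_mul).sub (hk.comp continuous_snd))) continuous_const)
      (by
        rintro ⟨v, z⟩ ⟨hv, _⟩
        simp only [Set.mem_singleton_iff] at hv
        subst hv
        show |k (1 * z) - k z| < δ
        rw [one_mul, sub_self, abs_zero]
        exact hδ)
  have hVδ : ∀ v ∈ V, ∀ z : K, |k (v * z) - k z| < δ := fun v hv z =>
    hVW (Set.mk_mem_prod hv (hWuniv (Set.mem_univ z)))
  have h1V' : (1 : K) ∈ V := h1V rfl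
  set C : K → Set K := fun φ => (fun x => x * φ⁻¹) ⁻¹' V with hC
  have hCopen : ∀ φ, IsOpen (C φ) := fun φ => hVopen.preimage (continuous_mul_right φ⁻¹)
  have hmemC : ∀ φ, φ ∈ C φ := by intro φ; simp [hC, h1V']
  obtain ⟨t, ht⟩ := isCompact_univ.elim_finite_subcover C hCopen
    (fun x _ => Set.mem_iUnion.mpr ⟨x, hmemC x⟩)
  set N := t.card with hN
  set φ' : Fin N → K := fun j => ((t.equivFin.symm j : {x // x ∈ t}) : K) with hφ'
  set B : Fin N → Set K := fun j => C (φ' j) \ ⋃ (l : Fin N), ⋃ (_ : l < j), C (φ' l) with hB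
  have hBmeas : ∀ j, MeasurableSet (B j) := fun j =>
    ((hCopen _).measurableSet).diff
      (MeasurableSet.iUnion fun l => MeasurableSet.iUnion fun _ => (hCopen _).measurableSet)
  have hBsub : ∀ j, B j ⊆ C (φ' j) := fun j => Set.diff_subset
  have hBdisj : Pairwise (Function.onFun Disjoint B) := by
    have key : ∀ p q : Fin N, p < q → Disjoint (B p) (B q) := by
      intro p q hlt
      rw [Set.disjoint_left]
      intro x hxp hxq
      exact hxq.2 (Set.mem_iUnion.mpr ⟨p, Set.mem_iUnion.mpr ⟨hlt, hxp.1⟩⟩)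
    intro p q hpq
    rcases lt_or_gt_of_ne hpq with h | h
    · exact key p q h
    · exact (key q p h).symm
  have hBunion : (⋃ j, B j) = Set.univ := by
    apply Set.eq_univ_of_forall
    intro x
    have hx : ∃ j : Fin N, x ∈ C (φ' j) := by
      have h2 := ht (Set.mem_univ x)
      rw [Set.mem_iUnion₂] at h2
      obtain ⟨φ, hφt, hxφ⟩ := h2
      refine ⟨t.equivFin ⟨φ, hφt⟩, ?_⟩
      simpa [hφ', Equiv.symm_apply_apply] using hxφ
    obtain ⟨j0, hj0, hmin⟩ := Finset.exists_min_image
      (Finset.univ.filter fun j => x ∈ C (φ' j)) id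
      (by obtain ⟨j, hj⟩ := hx
          exact ⟨j, Finset.mem_filter.mpr ⟨Finset.mem_univ _, hj⟩⟩)
    rw [Finset.mem_filter] at hj0
    refine Set.mem_iUnion.mpr ⟨j0, hj0.2, ?_⟩
    intro hmem
    rw [Set.mem_iUnion] at hmem
    obtain ⟨l, hl⟩ := hmem
    rw [Set.mem_iUnion] at hl
    obtain ⟨hl2, hxl⟩ := hl
    have := hmin l (Finset.mem_filter.mpr ⟨Finset.mem_univ _, hxl⟩)
    exact absurd hl2 (not_lt.mpr this)
  have hsum1 : ∑ j, σ (B j) = 1 := by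
    have h2 := measure_iUnion hBdisj hBmeas (μ := σ)
    rw [hBunion, tsum_fintype, measure_univ] at h2
    exact h2.symm
  set J := Finset.univ.filter (fun j : Fin N => σ (B j) ≠ 0) with hJ
  set n := Fintype.card {x // x ∈ J} with hn
  set e : Fin n ≃ {x // x ∈ J} := (Fintype.equivFin _).symm with he
  set w : Fin n → ℝ := fun j => (σ (B ((e j : {x // x ∈ J}) : Fin N))).toReal with hwdef
  set ψ : Fin n → K := fun j => φ' ((e j : {x // x ∈ J}) : Fin N) with hψ
  have hJzero : ∀ x ∈ Finset.univ, x ∉ J → σ (B x) = 0 := by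
    intro x _ hx
    by_contra h
    exact hx (Finset.mem_filter.mpr ⟨Finset.mem_univ _, h⟩)
  refine ⟨n, w, ψ, ?_, ?_, ?_⟩
  · intro j
    have hne : σ (B ((e j : {x // x ∈ J}) : Fin N)) ≠ 0 :=
      (Finset.mem_filter.mp (e j).2).2
    exact ENNReal.toReal_pos hne (measure_ne_top σ _)
  · have h1 : ∑ j : Fin n, w j = ∑ x : {x // x ∈ J}, (σ (B (x : Fin N))).toReal :=
      Equiv.sum_comp e (fun x : {x // x ∈ J} => (σ (B (x : Fin N))).toReal)
    rw [h1, Finset.sum_coe_sort J (fun x => (σ (B x)).toReal),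
      ← ENNReal.toReal_sum (fun a _ => measure_ne_top σ _),
      Finset.sum_subset (Finset.subset_univ J) hJzero, hsum1, ENNReal.toReal_one]
  · intro a
    have hInt1 : Integrable (fun z => k (z * a)) σ :=
      cont_integrable σ (hk.comp (continuous_mul_right a))
    have hInt : Integrable (fun z => k (z * a) + δ) σ :=
      hInt1.add (integrable_const δ)
    calc ∑ j : Fin n, k (ψ j * a) * w j
        = ∑ x : {x // x ∈ J}, k (φ' (x : Fin N) * a) * (σ (B (x : Fin N))).toReal :=
          Equiv.sum_comp e
            (fun x : {x // x ∈ J} => k (φ' (x : Fin N) * a) * (σ (B (x : Fin N))).toReal)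
      _ = ∑ x ∈ J, k (φ' x * a) * (σ (B x)).toReal :=
          Finset.sum_coe_sort J (fun x => k (φ' x * a) * (σ (B x)).toReal)
      _ ≤ ∑ x : Fin N, k (φ' x * a) * (σ (B x)).toReal :=
          Finset.sum_le_sum_of_subset_of_nonneg (Finset.subset_univ _)
            (fun x _ _ => mul_nonneg (hk0 _) ENNReal.toReal_nonneg)
      _ = ∑ x : Fin N, ∫ _ in B x, k (φ' x * a) ∂σ := by
          refine Finset.sum_congr rfl fun x _ => ?_
          rw [setIntegral_const, smul_eq_mul, mul_comm]; rfl
      _ ≤ ∑ x : Fin N, ∫ z in B x, (k (z * a) + δ) ∂σ := by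
          refine Finset.sum_le_sum fun x _ => ?_
          refine setIntegral_mono_on
            (integrableOn_const (measure_ne_top σ _))
            hInt.integrableOn (hBmeas x) ?_
          intro z hz
          have hv : z * (φ' x)⁻¹ ∈ V := hBsub x hz
          have h3 := hVδ _ hv (φ' x * a)
          have hza : z * (φ' x)⁻¹ * (φ' x * a) = z * a := by group
          rw [hza] at h3
          have h4 := abs_lt.mp h3
          linarith [h4.1]
      _ = ∫ z in ⋃ x ∈ (Finset.univ : Finset (Fin N)), B x, (k (z * a) + δ) ∂σ :=
          (integral_biUnion_finset Finset.univ (fun i _ => hBmeas i)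
            (hBdisj.set_pairwise _) (fun i _ => hInt.integrableOn)).symm
      _ = ∫ z, (k (z * a) + δ) ∂σ := by
          have h5 : (⋃ x ∈ (Finset.univ : Finset (Fin N)), B x) = Set.univ := by
            simpa using hBunion
          rw [h5, setIntegral_univ]
      _ = (∫ z, k (z * a) ∂σ) + δ := by
          rw [integral_add hInt1 (integrable_const δ), integral_const]
          simp
      _ ≤ c + δ := by
          rw [integral_mul_right_eq_self k a]
          linarith
end LemC

set_option maxHeartbeats 1000000 in
/-- Let `G₁,…,Gₘ` be compact Hausdorff topological groups, `Hᵢ` a closed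
translation invariant subspace of `C(Gᵢ)`, `Φ` a normalized Orlicz function, and
`u : H₁ × ⋯ × Hₘ → F` a translation `m`-invariant `Φ`-summing continuous `m`-linear operator.
Then the normalized Haar measure `σ` on `G = G₁ × ⋯ × Gₘ` is a Pietsch measure for `u`:
`‖u(T₁,…,Tₘ)‖ ≤ π_Φ(u) ⬝ ‖⊙(T₁,…,Tₘ)‖_{L_Φ(σ)}`. -/
theorem haar_is_pietsch_measure_phi_summing
    {m : ℕ} (hm : 0 < m) {G : Fin m → Type*}
    [∀ i, Group (G i)] [∀ i, TopologicalSpace (G i)] [∀ i, IsTopologicalGroup (G i)]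
    [∀ i, CompactSpace (G i)] [∀ i, T2Space (G i)]
    {F : Type*} [NormedAddCommGroup F] [NormedSpace ℝ F] [CompleteSpace F]
    (H : ∀ i, Subspace ℝ C(G i, ℝ)) (hHclosed : ∀ i, IsClosed ((H i : Set C(G i, ℝ))))
    -- each `Hᵢ` is translation invariant
    (hHinv : ∀ i, ∀ (ψ : G i) (T : C(G i, ℝ)), T ∈ H i →
      T.comp (Homeomorph.mulLeft ψ : C(G i, G i)) ∈ H i)
    -- `Φ` is a normalized Orlicz function
    (Φ : ℝ → ℝ) (hΦconv : ConvexOn ℝ (Set.Ici 0) Φ) (hΦmono : MonotoneOn Φ (Set.Ici 0))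
    (hΦcont : ContinuousOn Φ (Set.Ici 0)) (hΦ0 : Φ 0 = 0) (hΦ1 : Φ 1 = 1)
    (u : ContinuousMultilinearMap ℝ (fun i => H i) F)
    -- `u` is translation `m`-invariant
    (huinv : ∀ (ψ : ∀ i, G i) (T : ∀ i, H i),
      u (fun i => (⟨(T i : C(G i, ℝ)).comp (Homeomorph.mulLeft (ψ i) : C(G i, G i)),
        hHinv i (ψ i) (T i) (T i).2⟩ : H i)) = u T)
    -- `u` is `Φ`-summing
    (husum : ∃ C > (0 : ℝ), ∀ n : ℕ, ∀ w : Fin n → ℝ, (∀ j, 0 < w j) → (∑ j, w j = 1) →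
      ∀ x : Fin n → (∀ i, H i),
        orliczSeqNorm Φ w (fun j => ‖u (x j)‖) ≤
          C * ⨆ α : ∀ i, {a : StrongDual ℝ (H i) //
            @norm _ (@ContinuousLinearMap.hasOpNorm ℝ ℝ (H i) ℝ (Submodule.seminormedAddCommGroup (H i))
              _ _ _ (Submodule.normedSpace (H i)) _ _) a ≤ 1},
            orliczSeqNorm Φ w (fun j => ∏ i, (α i).1 (x j i))) :
    letI : MeasurableSpace (∀ i, G i) := borel _
    -- for the normalized Haar measure `σ` on `G₁ × ⋯ × Gₘ`
    ∀ σ : Measure (∀ i, G i), IsProbabilityMeasure σ → σ.IsMulLeftInvariant → σ.Regular →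
      ∀ T : ∀ i, H i,
        ‖u T‖ ≤
          sInf {C : ℝ | 0 < C ∧ ∀ n : ℕ, ∀ w : Fin n → ℝ, (∀ j, 0 < w j) → (∑ j, w j = 1) →
              ∀ x : Fin n → (∀ i, H i),
                orliczSeqNorm Φ w (fun j => ‖u (x j)‖) ≤
                  C * ⨆ α : ∀ i, {a : StrongDual ℝ (H i) //
            @norm _ (@ContinuousLinearMap.hasOpNorm ℝ ℝ (H i) ℝ (Submodule.seminormedAddCommGroup (H i))
              _ _ _ (Submodule.normedSpace (H i)) _ _) a ≤ 1},
                    orliczSeqNorm Φ w (fun j => ∏ i, (α i).1 (x j i))} *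
            luxemburgNorm Φ σ (fun φ => ∏ i, (T i : C(G i, ℝ)) (φ i)) := by
  
  intro σ hprob hlinv hreg T
  haveI : ∀ i, Nonempty (G i) := fun i => ⟨1⟩
  letI : MeasurableSpace (∀ i, G i) := borel _
  haveI : BorelSpace (∀ i, G i) := ⟨rfl⟩
  set g : (∀ i, G i) → ℝ := fun φ => ∏ i, (T i : C(G i, ℝ)) (φ i) with hg
  have hgcont : Continuous g := continuous_finset_prod _ fun i _ =>
    ((T i : C(G i, ℝ)).continuous).comp (continuous_apply i)
  have hcontφ : ∀ ε : ℝ, 0 < ε → Continuous fun φ => Φ (|g φ| / ε) := by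
    intro ε hε
    have h1 : Continuous fun φ => |g φ| / ε := hgcont.abs.div_const ε
    exact hΦcont.comp_continuous h1 (fun φ => Set.mem_Ici.mpr (by positivity))
  have hLne : {ε : ℝ | 0 < ε ∧ ∫ φ, Φ (|g φ| / ε) ∂σ ≤ 1}.Nonempty := by
    set M := ∏ i, ‖(T i : C(G i, ℝ))‖ with hM
    have hM0 : 0 ≤ M := Finset.prod_nonneg fun i _ => norm_nonneg _
    have hmax : (0:ℝ) < max M 1 := lt_of_lt_of_le one_pos (le_max_right _ _)
    refine ⟨max M 1, hmax, ?_⟩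
    have hb : ∀ φ, Φ (|g φ| / max M 1) ≤ 1 := by
      intro φ
      refine phi_le_one hΦmono hΦ1 (by positivity) ?_
      refine div_le_one_of_le₀ ?_ hmax.le
      have hgM : |g φ| ≤ M := by
        rw [hg, hM, Finset.abs_prod]
        refine Finset.prod_le_prod (fun i _ => abs_nonneg _) fun i _ => ?_
        simpa [Real.norm_eq_abs] using (T i : C(G i, ℝ)).norm_coe_le_norm (φ i)
      exact hgM.trans (le_max_left _ _)
    calc ∫ φ, Φ (|g φ| / max M 1) ∂σ
        ≤ ∫ _, (1:ℝ) ∂σ := integral_mono (cont_integrable σ (hcontφ _ hmax))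
          (integrable_const 1) hb
      _ = 1 := by simp
  have hLnonneg : 0 ≤ luxemburgNorm Φ σ g := Real.sInf_nonneg fun _ h => h.1.le
  have hint_le : ∀ ε : ℝ, luxemburgNorm Φ σ g < ε → ∫ φ, Φ (|g φ| / ε) ∂σ ≤ 1 := by
    intro ε hε
    obtain ⟨ε', hε'mem, hε'lt⟩ := exists_lt_of_csInf_lt hLne hε
    obtain ⟨hε'0, hε'int⟩ := hε'mem
    have hεpos : 0 < ε := lt_trans hε'0 hε'lt
    refine le_trans (integral_mono (cont_integrable σ (hcontφ ε hεpos))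
      (cont_integrable σ (hcontφ ε' hε'0)) ?_) hε'int
    intro φ
    refine hΦmono (Set.mem_Ici.mpr (by positivity)) (Set.mem_Ici.mpr (by positivity)) ?_
    exact div_le_div_of_nonneg_left (abs_nonneg _) hε'0 hε'lt.le
  have claim1 : ∀ C : ℝ, 0 < C →
      (∀ n : ℕ, ∀ w : Fin n → ℝ, (∀ j, 0 < w j) → (∑ j, w j = 1) →
        ∀ x : Fin n → (∀ i, H i),
          orliczSeqNorm Φ w (fun j => ‖u (x j)‖) ≤
            C * ⨆ α : ∀ i, {a : StrongDual ℝ (H i) // @norm _ (@ContinuousLinearMap.hasOpNorm ℝ ℝ (H i) ℝ (Submodule.seminormedAddCommGroup (H i)) _ _ _ (Submodule.normedSpace (H i)) _ _) a ≤ 1},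
              orliczSeqNorm Φ w (fun j => ∏ i, (α i).1 (x j i))) →
      ∀ ε : ℝ, luxemburgNorm Φ σ g < ε → ‖u T‖ ≤ C * ε := by
    intro C hC hCs ε hε
    have hε0 : 0 < ε := lt_of_le_of_lt hLnonneg hε
    have hstep : ∀ η : ℝ, 0 < η → ‖u T‖ ≤ C * (ε * (1 + η)) := by
      intro η hη
      set ε' := ε * (1 + η) with hε'def
      have h1η : (0:ℝ) < 1 + η := by linarith
      have hε'0 : 0 < ε' := mul_pos hε0 h1η
      set k : (∀ i, G i) → ℝ := fun z => Φ (|g z| / ε') with hkdef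
      have hkcont : Continuous k := hcontφ ε' hε'0
      have hk0 : ∀ z, 0 ≤ k z := fun z => phi_nonneg hΦmono hΦ0 (by positivity)
      have hkint : ∫ z, k z ∂σ ≤ 1 / (1 + η) := by
        have hptw : ∀ z, k z ≤ (1 / (1 + η)) * Φ (|g z| / ε) := by
          intro z
          have h1 : |g z| / ε' = (1 / (1 + η)) * (|g z| / ε) := by
            rw [hε'def, ← div_div, div_eq_mul_inv (|g z| / ε), ← one_div, mul_comm]
          rw [hkdef]
          simp only
          rw [h1]
          exact phi_scale hΦconv hΦ0 (by positivity)
            (by rw [div_le_one h1η]; linarith) (by positivity)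
        calc ∫ z, k z ∂σ ≤ ∫ z, (1 / (1 + η)) * Φ (|g z| / ε) ∂σ :=
              integral_mono (cont_integrable σ hkcont)
                ((cont_integrable σ (hcontφ ε hε0)).const_mul _) hptw
          _ = (1 / (1 + η)) * ∫ z, Φ (|g z| / ε) ∂σ := integral_const_mul _ _
          _ ≤ (1 / (1 + η)) * 1 :=
              mul_le_mul_of_nonneg_left (hint_le ε hε) (by positivity)
          _ = 1 / (1 + η) := mul_one _
      haveI hri : σ.IsMulRightInvariant := rightInvariant_of_leftInvariant σ
      obtain ⟨n, w, φs, hwpos, hwsum, hpt⟩ := riemann_partition σ hkcont hk0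
        (show (0:ℝ) < η / (1 + η) by positivity) hkint
      have hpt1 : ∀ a, ∑ j, k (φs j * a) * w j ≤ 1 := by
        intro a
        refine (hpt a).trans ?_
        rw [← add_div]
        rw [div_le_one h1η]
      set x : Fin n → ∀ i, H i := fun j i =>
        (⟨(T i : C(G i, ℝ)).comp (Homeomorph.mulLeft ((φs j) i) : C(G i, G i)),
          hHinv i ((φs j) i) (T i) (T i).2⟩ : H i) with hx
      have hxu : ∀ j, u (x j) = u T := fun j => huinv (φs j) T
      have hlhs : ‖u T‖ ≤ orliczSeqNorm Φ w (fun j => ‖u (x j)‖) := by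
        have he : (fun j => ‖u (x j)‖) = fun _ => ‖u T‖ := funext fun j => by rw [hxu j]
        rw [he]
        exact le_orliczSeqNorm_const hΦconv hΦmono hΦ0 hΦ1 hwsum (norm_nonneg _)
      have hrhs : (⨆ α : ∀ i, {a : StrongDual ℝ (H i) // @norm _ (@ContinuousLinearMap.hasOpNorm ℝ ℝ (H i) ℝ (Submodule.seminormedAddCommGroup (H i)) _ _ _ (Submodule.normedSpace (H i)) _ _) a ≤ 1},
          orliczSeqNorm Φ w (fun j => ∏ i, (α i).1 (x j i))) ≤ ε' := by
        haveI : Nonempty (∀ i, {a : StrongDual ℝ (H i) // @norm _ (@ContinuousLinearMap.hasOpNorm ℝ ℝ (H i) ℝ (Submodule.seminormedAddCommGroup (H i)) _ _ _ (Submodule.normedSpace (H i)) _ _) a ≤ 1}) :=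
          ⟨fun i => ⟨0, by simp⟩⟩
        refine ciSup_le fun α => ?_
        refine orliczSeqNorm_le hε'0 ?_
        have hptx : ∀ a : ∀ i, G i,
            ∑ j, Φ (|∏ i, ((x j i : C(G i, ℝ)) (a i))| / ε') * w j ≤ 1 := by
          intro a
          have hev : ∀ j : Fin n, (∏ i, ((x j i : C(G i, ℝ)) (a i))) = g (φs j * a) := by
            intro j
            rw [hg]
            refine Finset.prod_congr rfl fun i _ => ?_
            rw [hx]
            show ((T i : C(G i, ℝ)).comp
              (Homeomorph.mulLeft ((φs j) i) : C(G i, G i))) (a i)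
                = (T i : C(G i, ℝ)) ((φs j * a) i)
            rw [ContinuousMap.comp_apply]
            rfl
          simp_rw [hev]
          exact hpt1 a
        exact sum_phi_dual_le hΦconv hΦmono hΦcont H x (fun j => (hwpos j).le) hε'0 hptx α
      calc ‖u T‖ ≤ orliczSeqNorm Φ w (fun j => ‖u (x j)‖) := hlhs
        _ ≤ C * ⨆ α : ∀ i, {a : StrongDual ℝ (H i) // @norm _ (@ContinuousLinearMap.hasOpNorm ℝ ℝ (H i) ℝ (Submodule.seminormedAddCommGroup (H i)) _ _ _ (Submodule.normedSpace (H i)) _ _) a ≤ 1},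
              orliczSeqNorm Φ w (fun j => ∏ i, (α i).1 (x j i)) := hCs n w hwpos hwsum x
        _ ≤ C * ε' := mul_le_mul_of_nonneg_left hrhs hC.le
    refine le_of_forall_pos_le_add fun ς hς => ?_
    have hCε : 0 < C * ε := mul_pos hC hε0
    have h2 := hstep (ς / (C * ε)) (by positivity)
    calc ‖u T‖ ≤ C * (ε * (1 + ς / (C * ε))) := h2
      _ = C * ε + ς := by field_simp
  obtain ⟨C₀, hC₀pos, hC₀s⟩ := husum
  have hC₀mem : C₀ ∈ {C : ℝ | 0 < C ∧ ∀ n : ℕ, ∀ w : Fin n → ℝ,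
      (∀ j, 0 < w j) → (∑ j, w j = 1) → ∀ x : Fin n → (∀ i, H i),
        orliczSeqNorm Φ w (fun j => ‖u (x j)‖) ≤
          C * ⨆ α : ∀ i, {a : StrongDual ℝ (H i) // @norm _ (@ContinuousLinearMap.hasOpNorm ℝ ℝ (H i) ℝ (Submodule.seminormedAddCommGroup (H i)) _ _ _ (Submodule.normedSpace (H i)) _ _) a ≤ 1},
            orliczSeqNorm Φ w (fun j => ∏ i, (α i).1 (x j i))} := ⟨hC₀pos, hC₀s⟩
  have claim2 : ∀ C : ℝ, C ∈ {C : ℝ | 0 < C ∧ ∀ n : ℕ, ∀ w : Fin n → ℝ,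
      (∀ j, 0 < w j) → (∑ j, w j = 1) → ∀ x : Fin n → (∀ i, H i),
        orliczSeqNorm Φ w (fun j => ‖u (x j)‖) ≤
          C * ⨆ α : ∀ i, {a : StrongDual ℝ (H i) // @norm _ (@ContinuousLinearMap.hasOpNorm ℝ ℝ (H i) ℝ (Submodule.seminormedAddCommGroup (H i)) _ _ _ (Submodule.normedSpace (H i)) _ _) a ≤ 1},
            orliczSeqNorm Φ w (fun j => ∏ i, (α i).1 (x j i))} →
      ‖u T‖ ≤ C * luxemburgNorm Φ σ g := by
    intro C hC
    obtain ⟨hCpos, hCs2⟩ := hC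
    refine le_of_forall_pos_le_add fun ς hς => ?_
    have h2 := claim1 C hCpos hCs2 (luxemburgNorm Φ σ g + ς / C)
      (by have h3 : 0 < ς / C := div_pos hς hCpos
          linarith)
    calc ‖u T‖ ≤ C * (luxemburgNorm Φ σ g + ς / C) := h2
      _ = C * luxemburgNorm Φ σ g + ς := by
          rw [mul_add, mul_div_cancel₀ _ (ne_of_gt hCpos)]
  rcases eq_or_lt_of_le hLnonneg with hL0 | hLpos
  · have h0 : ‖u T‖ ≤ 0 := by
      refine le_of_forall_pos_le_add fun ς hς => ?_
      have h2 := claim1 C₀ hC₀pos hC₀s (ς / C₀)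
        (by rw [← hL0]; exact div_pos hς hC₀pos)
      calc ‖u T‖ ≤ C₀ * (ς / C₀) := h2
        _ = ς := by rw [mul_div_cancel₀ _ (ne_of_gt hC₀pos)]
        _ = 0 + ς := by ring
    calc ‖u T‖ ≤ 0 := h0
      _ ≤ _ * luxemburgNorm Φ σ g := by
          rw [← hL0, mul_zero]
  · have hSne : Set.Nonempty {C : ℝ | 0 < C ∧ ∀ n : ℕ, ∀ w : Fin n → ℝ,
        (∀ j, 0 < w j) → (∑ j, w j = 1) → ∀ x : Fin n → (∀ i, H i),
          orliczSeqNorm Φ w (fun j => ‖u (x j)‖) ≤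
            C * ⨆ α : ∀ i, {a : StrongDual ℝ (H i) // @norm _ (@ContinuousLinearMap.hasOpNorm ℝ ℝ (H i) ℝ (Submodule.seminormedAddCommGroup (H i)) _ _ _ (Submodule.normedSpace (H i)) _ _) a ≤ 1},
              orliczSeqNorm Φ w (fun j => ∏ i, (α i).1 (x j i))} := ⟨C₀, hC₀mem⟩
    have hSInfge : ‖u T‖ / luxemburgNorm Φ σ g ≤ sInf {C : ℝ | 0 < C ∧
        ∀ n : ℕ, ∀ w : Fin n → ℝ,
        (∀ j, 0 < w j) → (∑ j, w j = 1) → ∀ x : Fin n → (∀ i, H i),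
          orliczSeqNorm Φ w (fun j => ‖u (x j)‖) ≤
            C * ⨆ α : ∀ i, {a : StrongDual ℝ (H i) // @norm _ (@ContinuousLinearMap.hasOpNorm ℝ ℝ (H i) ℝ (Submodule.seminormedAddCommGroup (H i)) _ _ _ (Submodule.normedSpace (H i)) _ _) a ≤ 1},
              orliczSeqNorm Φ w (fun j => ∏ i, (α i).1 (x j i))} :=
      le_csInf hSne fun C hC => (div_le_iff₀ hLpos).mpr (claim2 C hC)
    calc ‖u T‖ = (‖u T‖ / luxemburgNorm Φ σ g) * luxemburgNorm Φ σ g := by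
          field_simp
      _ ≤ _ * luxemburgNorm Φ σ g :=
          mul_le_mul_of_nonneg_right hSInfge hLpos.le
end
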